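/- arXiv:1902.02509 — 4 statements merged into one kernel-verified Lean document; each statement's English description precedes it below -/
import Mathlib

section
/- Let ‖·‖_{S,p} denote the Schatten p-norm on n×q matrices, p* its Hölder conjugate, σ > 0, c ∈ R, and ω_σ(Z) = (1/2σ)‖Z‖² + cσ where ‖·‖ is the Frobenius norm. Then the inf-convolution satisfies (‖·‖_{S,p} □ ω_σ)(Z) = ‖Z‖²/(2σ) + cσ − (σ/2)‖Π_{B_{S,p*}}(Z/σ) − Z/σ‖², where Π_{B_{S,p*}} is the Frobenius projection onto the unit Schatten p*-ball. -/
open scoped ENNReal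
open Matrix

/-- Singular values of a real `n × q` matrix (padded with zeros to length `n`):
square roots of the eigenvalues of `A * Aᵀ`. -/
noncomputable def singVal {n q : ℕ} (A : Matrix (Fin n) (Fin q) ℝ) (i : Fin n) : ℝ :=
  Real.sqrt ((Matrix.isHermitian_mul_conjTranspose_self A).eigenvalues i)

/-- Schatten `p`-norm: the `ℓ_p` norm of the singular values. -/
noncomputable def schattenNorm {n q : ℕ} (p : ℝ≥0∞) (A : Matrix (Fin n) (Fin q) ℝ) : ℝ :=
  if p = ∞ then ⨆ i, singVal A i else (∑ i, (singVal A i) ^ p.toReal) ^ (1 / p.toReal)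

/-- Frobenius norm of a matrix. -/
noncomputable def frobNorm {n q : ℕ} (A : Matrix (Fin n) (Fin q) ℝ) : ℝ :=
  Real.sqrt (∑ i, ∑ j, (A i j) ^ 2)

open Finset

namespace Stmt5Aux


noncomputable def lpnorm (r : ℝ≥0∞) {m : ℕ} (x : Fin m → ℝ) : ℝ :=
  if r = ∞ then ⨆ i, x i else (∑ i, x i ^ r.toReal) ^ (1 / r.toReal)

lemma lpnorm_one {m : ℕ} (x : Fin m → ℝ) : lpnorm 1 x = ∑ i, x i := by
  simp [lpnorm, Real.rpow_one]

lemma lpnorm_top {m : ℕ} (x : Fin m → ℝ) : lpnorm ∞ x = ⨆ i, x i := by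
  simp [lpnorm]

/-- exhaustive case analysis on a conjugate pair of exponents -/
lemma conj_cases {r rs : ℝ≥0∞} (hr : 1 ≤ r) (hc : 1 / r + 1 / rs = 1) :
    (r = 1 ∧ rs = ∞) ∨ (r = ∞ ∧ rs = 1) ∨
    (r ≠ ∞ ∧ rs ≠ ∞ ∧ 1 < r.toReal ∧ 1 < rs.toReal ∧
      1 / r.toReal + 1 / rs.toReal = 1) := by
  by_cases hr1 : r = 1
  · left
    refine ⟨hr1, ?_⟩
    subst hr1
    have h : 1 / rs = 0 := by
      have h2 : (1:ℝ≥0∞) + 1 / rs = 1 + 0 := by simpa using hc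
      exact (ENNReal.add_right_inj (by simp)).mp h2
    rw [one_div] at h
    simpa using ENNReal.inv_eq_zero.mp h
  by_cases hrtop : r = ∞
  · right; left
    refine ⟨hrtop, ?_⟩
    subst hrtop
    have h : 1 / rs = 1 := by simpa using hc
    rw [one_div] at h
    simpa using ENNReal.inv_eq_one.mp h
  · right; right
    have hrs1 : 1 ≤ rs := by
      have h : 1 / rs ≤ 1 := le_of_le_of_eq le_add_self hc
      rw [one_div] at h
      exact ENNReal.inv_le_one.mp h
    have hrstop : rs ≠ ∞ := by
      intro h
      subst h
      apply hr1
      have : 1 / r = 1 := by simpa using hc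
      rw [one_div] at this
      simpa using ENNReal.inv_eq_one.mp this
    have hr0 : r ≠ 0 := by intro h; rw [h] at hr; simp at hr
    have hrs0 : rs ≠ 0 := by intro h; rw [h] at hrs1; simp at hrs1
    have htr : 1 / r.toReal + 1 / rs.toReal = 1 := by
      have h := congrArg ENNReal.toReal hc
      rw [ENNReal.toReal_add (by simp [ENNReal.div_eq_top, hr0])
        (by simp [ENNReal.div_eq_top, hrs0]), ENNReal.toReal_div, ENNReal.toReal_div] at h
      simpa using h
    have h1r : 1 < r.toReal := by
      rw [← ENNReal.toReal_one]
      exact (ENNReal.toReal_lt_toReal (by simp) hrtop).mpr (lt_of_le_of_ne hr (Ne.symm hr1))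
    have h1rs : 1 < rs.toReal := by
      have ha : (0:ℝ) < 1 / r.toReal := by positivity
      have hb : 1 / r.toReal < 1 := (div_lt_one (by linarith)).mpr h1r
      have hc2 : 0 < 1 / rs.toReal := by linarith
      have hrs0' : 0 < rs.toReal := by
        rcases lt_trichotomy rs.toReal 0 with h | h | h
        · exact absurd (div_neg_of_pos_of_neg one_pos h) (by linarith)
        · rw [h, div_zero] at hc2; exact absurd hc2 (lt_irrefl 0)
        · exact h
      have hd : 1 / rs.toReal < 1 := by linarith
      rwa [div_lt_one hrs0'] at hd
    exact ⟨hrtop, hrstop, h1r, h1rs, htr⟩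

lemma lpnorm_zero {m : ℕ} {r : ℝ≥0∞} (hr : 1 ≤ r) : lpnorm r (0 : Fin m → ℝ) = 0 := by
  unfold lpnorm
  split
  · rcases Nat.eq_zero_or_pos m with h | h
    · subst h
      exact Real.iSup_of_isEmpty _
    · have : Nonempty (Fin m) := ⟨⟨0, h⟩⟩
      simp
  · rename_i hrtop
    have hrt : 0 < r.toReal := ENNReal.toReal_pos (by rintro rfl; simp at hr) hrtop
    rw [Finset.sum_congr rfl fun i _ => by
      simpa using Real.zero_rpow (ne_of_gt hrt)]
    simp
    exact Real.zero_rpow (by positivity)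

lemma vecHolder {m : ℕ} (r rs : ℝ≥0∞) (hr : 1 ≤ r) (hc : 1 / r + 1 / rs = 1)
    (x y : Fin m → ℝ) (hx : ∀ i, 0 ≤ x i) (hy : ∀ i, 0 ≤ y i) :
    ∑ i, x i * y i ≤ lpnorm r x * lpnorm rs y := by
  rcases conj_cases hr hc with ⟨h1, h2⟩ | ⟨h1, h2⟩ | ⟨h1, h2, h3, h4, h5⟩
  · subst h1; subst h2
    rw [lpnorm_one, lpnorm_top]
    calc ∑ i, x i * y i ≤ ∑ i, x i * (⨆ j, y j) :=
          Finset.sum_le_sum fun i _ =>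
            mul_le_mul_of_nonneg_left (le_ciSup (Set.Finite.bddAbove (Set.finite_range y)) i) (hx i)
      _ = (∑ i, x i) * (⨆ j, y j) := by rw [← Finset.sum_mul]
  · subst h1; subst h2
    rw [lpnorm_one, lpnorm_top]
    calc ∑ i, x i * y i ≤ ∑ i, (⨆ j, x j) * y i :=
          Finset.sum_le_sum fun i _ =>
            mul_le_mul_of_nonneg_right (le_ciSup (Set.Finite.bddAbove (Set.finite_range x)) i) (hy i)
      _ = (⨆ j, x j) * ∑ i, y i := by rw [← Finset.mul_sum]
  · have hconj : Real.HolderConjugate r.toReal rs.toReal := by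
      rw [Real.holderConjugate_iff]
      constructor
      · exact h3
      · rw [← one_div, ← one_div]; exact h5
    have := Real.inner_le_Lp_mul_Lq_of_nonneg Finset.univ hconj
      (fun i _ => hx i) (fun i _ => hy i)
    unfold lpnorm
    rw [if_neg h1, if_neg h2]
    exact this

lemma vecDual {m : ℕ} (r rs : ℝ≥0∞) (hr : 1 ≤ r) (hc : 1 / r + 1 / rs = 1)
    (x : Fin m → ℝ) (hx : ∀ i, 0 ≤ x i) :
    ∃ d : Fin m → ℝ, (∀ i, 0 ≤ d i) ∧ (∀ i, x i = 0 → d i = 0) ∧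
      lpnorm rs d ≤ 1 ∧ ∑ i, d i * x i = lpnorm r x := by
  have hrs1 : 1 ≤ rs := by
    have h : 1 / rs ≤ 1 := le_of_le_of_eq le_add_self hc
    rw [one_div] at h
    exact ENNReal.inv_le_one.mp h
  by_cases hx0 : ∀ i, x i = 0
  · refine ⟨0, by simp, by simp, ?_, ?_⟩
    · rw [show (0 : Fin m → ℝ) = (0:Fin m → ℝ) from rfl, lpnorm_zero hrs1]; norm_num
    · have hxz : x = 0 := funext hx0
      rw [hxz, lpnorm_zero hr]
      simp
  push_neg at hx0
  obtain ⟨i0, hi0⟩ := hx0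
  have hi0pos : 0 < x i0 := lt_of_le_of_ne (hx i0) (Ne.symm hi0)
  have hm : Nonempty (Fin m) := ⟨i0⟩
  rcases conj_cases hr hc with ⟨h1, h2⟩ | ⟨h1, h2⟩ | ⟨h1, h2, h3, h4, h5⟩
  · -- r = 1, rs = ∞
    subst h1; subst h2
    refine ⟨fun i => if x i = 0 then 0 else 1,
      fun i => by by_cases h : x i = 0 <;> simp [h],
      fun i hxi => by simp [hxi], ?_, ?_⟩
    · rw [lpnorm_top]
      exact ciSup_le fun i => by by_cases h : x i = 0 <;> simp [h]
    · rw [lpnorm_one]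
      apply Finset.sum_congr rfl
      intro i _
      by_cases hxi : x i = 0 <;> simp [hxi]
  · -- r = ∞, rs = 1
    subst h1; subst h2
    obtain ⟨i1, _, hmax⟩ := Finset.exists_max_image Finset.univ x ⟨i0, Finset.mem_univ i0⟩
    have hxi1 : 0 < x i1 := lt_of_lt_of_le hi0pos (hmax i0 (Finset.mem_univ i0))
    refine ⟨fun i => if i = i1 then 1 else 0,
      fun i => by by_cases h : i = i1 <;> simp [h],
      fun i hxi => by
        by_cases h : i = i1
        · exfalso; rw [h] at hxi; rw [hxi] at hxi1; exact lt_irrefl 0 hxi1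
        · simp [h], ?_, ?_⟩
    · rw [lpnorm_one]
      simp
    · rw [lpnorm_top]
      have hsum : ∑ i, (if i = i1 then (1:ℝ) else 0) * x i = x i1 := by
        rw [Finset.sum_eq_single i1]
        · simp
        · intro b _ hb; simp [hb]
        · intro h; exact absurd (Finset.mem_univ i1) h
      rw [hsum]
      refine le_antisymm (le_ciSup (Set.Finite.bddAbove (Set.finite_range x)) i1) ?_
      exact ciSup_le fun i => hmax i (Finset.mem_univ i)
  · -- 1 < r < ∞
    set rt := r.toReal with hrt
    set rst := rs.toReal with hrst
    have hrt0 : 0 < rt := lt_trans one_pos h3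
    have hrst0 : 0 < rst := lt_trans one_pos h4
    set T := ∑ i, x i ^ rt with hT
    have hTpos : 0 < T := by
      apply Finset.sum_pos'
      · intro i _; exact Real.rpow_nonneg (hx i) _
      · exact ⟨i0, Finset.mem_univ i0, Real.rpow_pos_of_pos hi0pos _⟩
    set S := T ^ (1/rt) with hS
    have hSpos : 0 < S := Real.rpow_pos_of_pos hTpos _
    have hSrt : S ^ rt = T := by
      rw [hS, ← Real.rpow_mul (le_of_lt hTpos), one_div,
        inv_mul_cancel₀ (ne_of_gt hrt0), Real.rpow_one]
    have hprod : (rt - 1) * rst = rt := by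
      have h6 : rt * rst ≠ 0 := by positivity
      field_simp at h5
      nlinarith [h5]
    refine ⟨fun i => x i ^ (rt - 1) / S ^ (rt - 1),
      fun i => div_nonneg (Real.rpow_nonneg (hx i) _) (Real.rpow_nonneg hSpos.le _),
      fun i hxi => by
        simp only [hxi]
        rw [Real.zero_rpow (by intro h; nlinarith [h] : rt - 1 ≠ 0), zero_div], ?_, ?_⟩
    · -- lpnorm rs d ≤ 1
      unfold lpnorm
      rw [if_neg h2]
      have hterm : ∀ i, (x i ^ (rt - 1) / S ^ (rt - 1)) ^ rst = x i ^ rt / S ^ rt := by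
        intro i
        rw [Real.div_rpow (Real.rpow_nonneg (hx i) _) (Real.rpow_nonneg (le_of_lt hSpos) _),
          ← Real.rpow_mul (hx i), ← Real.rpow_mul (le_of_lt hSpos), hprod]
      rw [Finset.sum_congr rfl fun i _ => hterm i, ← Finset.sum_div, ← hT, hSrt,
        div_self (ne_of_gt hTpos), Real.one_rpow]
    · -- the pairing attains
      have hterm : ∀ i, x i ^ (rt - 1) / S ^ (rt - 1) * x i = x i ^ rt / S ^ (rt - 1) := by
        intro i
        rcases eq_or_lt_of_le (hx i) with h | h
        · rw [← h, Real.zero_rpow (by intro hz; nlinarith [hz] : rt - 1 ≠ 0),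
            Real.zero_rpow (ne_of_gt hrt0)]
          simp
        · rw [div_mul_eq_mul_div]
          congr 1
          nth_rewrite 2 [← Real.rpow_one (x i)]
          rw [← Real.rpow_add h, sub_add_cancel]
      rw [Finset.sum_congr rfl fun i _ => hterm i, ← Finset.sum_div, ← hT]
      have hSsplit : T = S * S ^ (rt - 1) := by
        rw [← hSrt]
        nth_rewrite 1 [show rt = (rt - 1) + 1 by ring]
        rw [Real.rpow_add hSpos, Real.rpow_one]
        ring
      have hlp : lpnorm r x = S := by
        unfold lpnorm
        rw [if_neg h1]
      rw [hlp, hSsplit, mul_div_assoc, div_self (ne_of_gt (Real.rpow_pos_of_pos hSpos _)), mul_one]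



lemma count_le {m K : ℕ} (hK : K < m) :
    ∑ i ∈ range m, (if i ≤ K then (1:ℝ) else 0) = K + 1 := by
  rw [← Finset.sum_filter]
  have h : (range m).filter (fun i => i ≤ K) = range (K + 1) := by
    ext i
    simp only [mem_filter, mem_range]
    omega
  rw [h]
  simp

lemma swapB (m : ℕ) (c g : ℕ → ℝ) :
    ∑ i ∈ range m, (∑ k ∈ range m, if i ≤ k then c k else 0) * g i
      = ∑ k ∈ range m, c k * ∑ i ∈ range m, (if i ≤ k then (1:ℝ) else 0) * g i := by
  simp only [Finset.sum_mul, Finset.mul_sum]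
  rw [Finset.sum_comm]
  refine Finset.sum_congr rfl fun k _ => Finset.sum_congr rfl fun i _ => ?_
  by_cases h : i ≤ k <;> simp [h]

lemma hSle {m : ℕ} {K : ℕ} (hK : K < m) (g : ℕ → ℝ) (hg0 : ∀ j, 0 ≤ g j)
    (hg1 : ∀ j, g j ≤ 1) :
    ∑ j ∈ range m, (if j ≤ K then (1:ℝ) else 0) * g j ≤ K + 1 := by
  calc ∑ j ∈ range m, (if j ≤ K then (1:ℝ) else 0) * g j
      ≤ ∑ j ∈ range m, (if j ≤ K then (1:ℝ) else 0) * 1 :=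
        Finset.sum_le_sum fun j _ => by
          by_cases h : j ≤ K
          · simp [h, hg1 j]
          · simp [h]
    _ = K + 1 := by
        simp only [mul_one]
        exact count_le hK

lemma rearr (m : ℕ) (s t : ℕ → ℝ) (hs0 : s m = 0) (ht0 : t m = 0)
    (hsa : Antitone s) (hta : Antitone t)
    (D : ℕ → ℕ → ℝ) (hD : ∀ i j, 0 ≤ D i j)
    (hrow : ∀ i, ∑ j ∈ range m, D i j ≤ 1)
    (hcol : ∀ j, ∑ i ∈ range m, D i j ≤ 1) :
    ∑ i ∈ range m, ∑ j ∈ range m, D i j * s i * t j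
      ≤ ∑ i ∈ range m, s i * t i := by
  have hak : ∀ k, 0 ≤ s k - s (k + 1) := fun k => sub_nonneg.mpr (hsa (Nat.le_succ k))
  have hbk : ∀ k, 0 ≤ t k - t (k + 1) := fun k => sub_nonneg.mpr (hta (Nat.le_succ k))
  have htel : ∀ (u : ℕ → ℝ), u m = 0 → ∀ i, i < m →
      u i = ∑ k ∈ range m, if i ≤ k then (u k - u (k + 1)) else 0 := by
    intro u hu i hi
    rw [← Finset.sum_filter]
    have h : (range m).filter (fun k => i ≤ k) = Finset.Ico i m := by
      ext k
      simp only [mem_filter, mem_range, Finset.mem_Ico]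
      omega
    rw [h, Finset.sum_Ico_eq_sub _ (le_of_lt hi), Finset.sum_range_sub' u,
      Finset.sum_range_sub' u, hu]
    ring
  -- LHS rewritten
  have hLHS : ∑ i ∈ range m, ∑ j ∈ range m, D i j * s i * t j
      = ∑ k ∈ range m, (s k - s (k + 1)) * ∑ l ∈ range m, (t l - t (l + 1)) *
          (∑ j ∈ range m, (if j ≤ l then (1:ℝ) else 0) *
            ∑ i ∈ range m, (if i ≤ k then (1:ℝ) else 0) * D i j) := by
    have step1 : ∑ i ∈ range m, ∑ j ∈ range m, D i j * s i * t j
        = ∑ i ∈ range m, (∑ k ∈ range m, if i ≤ k then (s k - s (k + 1)) else 0) *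
            (∑ j ∈ range m, D i j * t j) := by
      refine Finset.sum_congr rfl fun i hi => ?_
      rw [← htel s hs0 i (mem_range.mp hi), Finset.mul_sum]
      exact Finset.sum_congr rfl fun j _ => by ring
    rw [step1, swapB m _ (fun i => ∑ j ∈ range m, D i j * t j)]
    refine Finset.sum_congr rfl fun k hk => ?_
    congr 1
    have e1 : ∑ i ∈ range m, (if i ≤ k then (1:ℝ) else 0) * ∑ j ∈ range m, D i j * t j
        = ∑ j ∈ range m, ∑ i ∈ range m, (if i ≤ k then (1:ℝ) else 0) * (D i j * t j) := by
      simp only [Finset.mul_sum]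
      exact Finset.sum_comm
    have step2 : ∑ i ∈ range m, (if i ≤ k then (1:ℝ) else 0) * ∑ j ∈ range m, D i j * t j
        = ∑ j ∈ range m, (∑ l ∈ range m, if j ≤ l then (t l - t (l + 1)) else 0) *
            (∑ i ∈ range m, (if i ≤ k then (1:ℝ) else 0) * D i j) := by
      rw [e1]
      refine Finset.sum_congr rfl fun j hj => ?_
      rw [← htel t ht0 j (mem_range.mp hj), Finset.mul_sum]
      exact Finset.sum_congr rfl fun i _ => by ring
    rw [step2, swapB m _ (fun j => ∑ i ∈ range m, (if i ≤ k then (1:ℝ) else 0) * D i j)]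
  -- RHS rewritten
  have hRHS : ∑ i ∈ range m, s i * t i
      = ∑ k ∈ range m, (s k - s (k + 1)) * ∑ l ∈ range m, (t l - t (l + 1)) *
          (∑ i ∈ range m, (if i ≤ l then (1:ℝ) else 0) * (if i ≤ k then (1:ℝ) else 0)) := by
    have step1 : ∑ i ∈ range m, s i * t i
        = ∑ i ∈ range m, (∑ k ∈ range m, if i ≤ k then (s k - s (k + 1)) else 0) * t i :=
      Finset.sum_congr rfl fun i hi => by rw [← htel s hs0 i (mem_range.mp hi)]
    rw [step1, swapB m _ t]
    refine Finset.sum_congr rfl fun k hk => ?_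
    congr 1
    have step2 : ∑ i ∈ range m, (if i ≤ k then (1:ℝ) else 0) * t i
        = ∑ i ∈ range m, (∑ l ∈ range m, if i ≤ l then (t l - t (l + 1)) else 0) *
            (if i ≤ k then (1:ℝ) else 0) := by
      refine Finset.sum_congr rfl fun i hi => ?_
      rw [← htel t ht0 i (mem_range.mp hi)]
      ring
    rw [step2, swapB m _ (fun i => if i ≤ k then (1:ℝ) else 0)]
  rw [hLHS, hRHS]
  refine Finset.sum_le_sum fun k hk => ?_
  refine mul_le_mul_of_nonneg_left (Finset.sum_le_sum fun l hl => ?_) (hak k)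
  refine mul_le_mul_of_nonneg_left ?_ (hbk l)
  have hkm := mem_range.mp hk
  have hlm := mem_range.mp hl
  -- count identity
  have hcount : ∑ i ∈ range m, (if i ≤ l then (1:ℝ) else 0) * (if i ≤ k then (1:ℝ) else 0)
      = ((min k l : ℕ) : ℝ) + 1 := by
    have h1 : ∀ i : ℕ, (if i ≤ l then (1:ℝ) else 0) * (if i ≤ k then (1:ℝ) else 0)
        = (if i ≤ min k l then (1:ℝ) else 0) := by
      intro i
      by_cases h1 : i ≤ l <;> by_cases h2 : i ≤ k
      · rw [if_pos h1, if_pos h2, if_pos (by omega)]; ring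
      · rw [if_pos h1, if_neg h2, if_neg (by omega)]; ring
      · rw [if_neg h1, if_pos h2, if_neg (by omega)]; ring
      · rw [if_neg h1, if_neg h2, if_neg (by omega)]; ring
    rw [Finset.sum_congr rfl fun i _ => h1 i, count_le (by omega : min k l < m)]
  rw [hcount]
  -- two bounds on the substochastic partial sum
  have hE0 : ∀ j, 0 ≤ ∑ i ∈ range m, (if i ≤ k then (1:ℝ) else 0) * D i j := by
    intro j
    refine Finset.sum_nonneg fun i _ => ?_
    by_cases h : i ≤ k <;> simp [h, hD i j]
  have hE1 : ∀ j, ∑ i ∈ range m, (if i ≤ k then (1:ℝ) else 0) * D i j ≤ 1 := by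
    intro j
    calc ∑ i ∈ range m, (if i ≤ k then (1:ℝ) else 0) * D i j
        ≤ ∑ i ∈ range m, D i j := Finset.sum_le_sum fun i _ => by
          by_cases h : i ≤ k <;> simp [h, hD i j]
      _ ≤ 1 := hcol j
  rcases le_total k l with h | h
  · -- min = k ; use row bound
    rw [min_eq_left h]
    have hswap : ∑ j ∈ range m, (if j ≤ l then (1:ℝ) else 0) *
          (∑ i ∈ range m, (if i ≤ k then (1:ℝ) else 0) * D i j)
        = ∑ i ∈ range m, (if i ≤ k then (1:ℝ) else 0) *
          (∑ j ∈ range m, (if j ≤ l then (1:ℝ) else 0) * D i j) := by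
      simp only [Finset.mul_sum]
      rw [Finset.sum_comm]
      exact Finset.sum_congr rfl fun i _ => Finset.sum_congr rfl fun j _ => by ring
    rw [hswap]
    refine hSle hkm _ (fun i => ?_) (fun i => ?_)
    · refine Finset.sum_nonneg fun j _ => ?_
      by_cases h3 : j ≤ l <;> simp [h3, hD i j]
    · calc ∑ j ∈ range m, (if j ≤ l then (1:ℝ) else 0) * D i j
          ≤ ∑ j ∈ range m, D i j := Finset.sum_le_sum fun j _ => by
            by_cases h3 : j ≤ l <;> simp [h3, hD i j]
        _ ≤ 1 := hrow i
  · -- min = l ; use column bound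
    rw [min_eq_right h]
    exact hSle hlm _ hE0 hE1



lemma bessel {q k : ℕ} (w : Fin k → Fin q → ℝ) (ε : Fin k → ℝ)
    (hw : ∀ i j, dotProduct (w i) (w j) = if i = j then ε i else 0)
    (hε : ∀ i, ε i = 0 ∨ ε i = 1) (x : Fin q → ℝ) :
    ∑ j, (dotProduct x (w j)) ^ 2 ≤ dotProduct x x := by
  classical
  set c : Fin k → ℝ := fun j => dotProduct x (w j) with hc
  have hwz : ∀ j, ε j = 0 → w j = 0 := by
    intro j hj
    have h := hw j j
    rw [if_pos rfl, hj] at h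
    funext b
    have hnn : ∀ b' ∈ Finset.univ, (0:ℝ) ≤ w j b' * w j b' := fun b' _ => mul_self_nonneg _
    have := (Finset.sum_eq_zero_iff_of_nonneg hnn).mp h b (Finset.mem_univ b)
    exact mul_self_eq_zero.mp this
  have hc0 : ∀ j, ε j = 0 → c j = 0 := by
    intro j hj
    rw [hc]
    dsimp only
    rw [hwz j hj, dotProduct_zero]
  set S : Fin q → ℝ := fun b => ∑ j, c j * w j b with hS
  -- cross term
  have hxS : ∑ b, x b * S b = ∑ j, c j * c j := by
    have h1 : ∀ b, x b * S b = ∑ j, c j * (x b * w j b) := by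
      intro b
      rw [hS]
      dsimp only
      rw [Finset.mul_sum]
      exact Finset.sum_congr rfl fun j _ => by ring
    rw [Finset.sum_congr rfl fun b _ => h1 b, Finset.sum_comm]
    refine Finset.sum_congr rfl fun j _ => ?_
    rw [← Finset.mul_sum]
    rfl
  -- square term
  have hSS : ∑ b, S b * S b = ∑ j, c j * c j * ε j := by
    have h1 : ∀ b, S b * S b = ∑ j, ∑ l, (c j * w j b) * (c l * w l b) := by
      intro b
      rw [hS]
      dsimp only
      rw [Finset.sum_mul_sum]
    rw [Finset.sum_congr rfl fun b _ => h1 b, Finset.sum_comm]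
    refine Finset.sum_congr rfl fun j _ => ?_
    have h2 : ∀ l, ∑ b, (c j * w j b) * (c l * w l b)
        = c j * c l * dotProduct (w j) (w l) := by
      intro l
      unfold dotProduct
      rw [Finset.mul_sum]
      exact Finset.sum_congr rfl fun b _ => by ring
    rw [Finset.sum_comm, Finset.sum_congr rfl fun l _ => h2 l]
    rw [Finset.sum_eq_single j]
    · rw [hw j j, if_pos rfl]
    · intro l _ hl
      rw [hw j l, if_neg (Ne.symm hl)]
      ring
    · intro h; exact absurd (Finset.mem_univ j) h
  have hyy : 0 ≤ ∑ b, (x b - S b) * (x b - S b) :=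
    Finset.sum_nonneg fun b _ => mul_self_nonneg _
  have hexp : ∑ b, (x b - S b) * (x b - S b)
      = ∑ b, x b * x b - 2 * ∑ b, x b * S b + ∑ b, S b * S b := by
    calc ∑ b, (x b - S b) * (x b - S b)
        = ∑ b, (x b * x b - 2 * (x b * S b) + S b * S b) :=
          Finset.sum_congr rfl fun b _ => by ring
      _ = ∑ b, (x b * x b - 2 * (x b * S b)) + ∑ b, S b * S b :=
          Finset.sum_add_distrib
      _ = (∑ b, x b * x b - ∑ b, 2 * (x b * S b)) + ∑ b, S b * S b := by
          rw [Finset.sum_sub_distrib]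
      _ = ∑ b, x b * x b - 2 * ∑ b, x b * S b + ∑ b, S b * S b := by
          rw [← Finset.mul_sum]
  have hcε : ∑ j, c j * c j * ε j = ∑ j, c j * c j := by
    refine Finset.sum_congr rfl fun j _ => ?_
    rcases hε j with h | h
    · rw [h, hc0 j h]; ring
    · rw [h]; ring
  rw [hexp, hxS, hSS, hcε] at hyy
  have hfin : ∑ j, c j * c j ≤ dotProduct x x := by
    have : dotProduct x x = ∑ b, x b * x b := rfl
    rw [this]
    linarith
  calc ∑ j, (dotProduct x (w j)) ^ 2 = ∑ j, c j * c j :=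
        Finset.sum_congr rfl fun j _ => by rw [sq]
    _ ≤ dotProduct x x := hfin



lemma svd {n q : ℕ} (A : Matrix (Fin n) (Fin q) ℝ) :
    ∃ (Q : Matrix (Fin n) (Fin n) ℝ) (v : Fin n → Fin q → ℝ),
      Qᵀ * Q = 1 ∧ Q * Qᵀ = 1 ∧
      (∀ i j, dotProduct (v i) (v j) =
        if i = j then (if singVal A i = 0 then 0 else 1) else 0) ∧
      (∀ i, singVal A i = 0 → v i = 0) ∧
      (∀ a b, A a b = ∑ i, singVal A i * Q a i * v i b) := by
  classical
  set hH := Matrix.isHermitian_mul_conjTranspose_self A with hHdef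
  set M : Matrix (Fin n) (Fin n) ℝ := A * Aᴴ with hMdef
  set lam : Fin n → ℝ := hH.eigenvalues with hlam
  set Q : Matrix (Fin n) (Fin n) ℝ := (Matrix.IsHermitian.eigenvectorUnitary hH : Matrix (Fin n) (Fin n) ℝ) with hQdef
  have hstarQ : star Q = Qᵀ := by
    ext i j
    simp [Matrix.star_apply]
  have hQ1 : Qᵀ * Q = 1 := by
    rw [← hstarQ]
    exact Matrix.mem_unitaryGroup_iff'.mp (Matrix.IsHermitian.eigenvectorUnitary hH).2
  have hQ2 : Q * Qᵀ = 1 := by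
    rw [← hstarQ]
    exact Matrix.mem_unitaryGroup_iff.mp (Matrix.IsHermitian.eigenvectorUnitary hH).2
  have hspec : M = Q * Matrix.diagonal lam * Qᵀ := by
    rw [← hstarQ]
    have := hH.spectral_theorem
    simpa [RCLike.ofReal_real_eq_id] using this
  have hMQ : M * Q = Q * Matrix.diagonal lam := by
    rw [hspec, Matrix.mul_assoc, Matrix.mul_assoc, hQ1, Matrix.mul_one]
  have hMQe : ∀ (a : Fin n) (j : Fin n), ∑ c, M a c * Q c j = Q a j * lam j := by
    intro a j
    have h := congrFun (congrFun hMQ a) j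
    rw [Matrix.mul_apply, Matrix.mul_apply] at h
    rw [h]
    rw [Finset.sum_eq_single j]
    · rw [Matrix.diagonal_apply_eq]
    · intro b _ hb; rw [Matrix.diagonal_apply_ne _ hb]; ring
    · intro h'; exact absurd (Finset.mem_univ j) h'
  have hMe : ∀ a c, M a c = ∑ b, A a b * A c b := by
    intro a c
    rw [hMdef, Matrix.mul_apply]
    exact Finset.sum_congr rfl fun b _ => by
      rw [Matrix.conjTranspose_apply]; simp
  have hQorth : ∀ i j, ∑ a, Q a i * Q a j = if i = j then (1:ℝ) else 0 := by
    intro i j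
    have h := congrFun (congrFun hQ1 i) j
    rw [Matrix.mul_apply] at h
    have h2 : ∑ a, Q a i * Q a j = ∑ a, Qᵀ i a * Q a j :=
      Finset.sum_congr rfl fun a _ => by rw [Matrix.transpose_apply]
    rw [h2, h, Matrix.one_apply]
  have hQcomp : ∀ a c, ∑ i, Q a i * Q c i = if a = c then (1:ℝ) else 0 := by
    intro a c
    have h := congrFun (congrFun hQ2 a) c
    rw [Matrix.mul_apply] at h
    have h2 : ∑ i, Q a i * Q c i = ∑ i, Q a i * Qᵀ i c :=
      Finset.sum_congr rfl fun i _ => by rw [Matrix.transpose_apply]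
    rw [h2, h, Matrix.one_apply]
  -- the vectors w i = Aᵀ (i-th column of Q)
  set w : Fin n → Fin q → ℝ := fun i b => ∑ a, A a b * Q a i with hwdef
  have hAw : ∀ (a : Fin n) (j : Fin n), ∑ b, A a b * w j b = Q a j * lam j := by
    intro a j
    have h1 : ∀ b, A a b * w j b = ∑ c, A a b * (A c b * Q c j) := by
      intro b
      rw [hwdef, Finset.mul_sum]
    rw [Finset.sum_congr rfl fun b _ => h1 b, Finset.sum_comm]
    rw [← hMQe a j]
    refine Finset.sum_congr rfl fun c _ => ?_
    rw [hMe a c, Finset.sum_mul]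
    exact Finset.sum_congr rfl fun b _ => by ring
  have hw : ∀ i j, dotProduct (w i) (w j) = if i = j then lam i else 0 := by
    intro i j
    unfold dotProduct
    have h1 : ∀ b, w i b * w j b = ∑ a, (A a b * Q a i) * w j b := by
      intro b
      rw [hwdef, Finset.sum_mul]
    rw [Finset.sum_congr rfl fun b _ => h1 b, Finset.sum_comm]
    have h2 : ∀ a, ∑ b, (A a b * Q a i) * w j b = Q a i * (Q a j * lam j) := by
      intro a
      rw [← hAw a j, Finset.mul_sum]
      exact Finset.sum_congr rfl fun b _ => by ring
    rw [Finset.sum_congr rfl fun a _ => h2 a]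
    have h3 : ∑ a, Q a i * (Q a j * lam j) = lam j * ∑ a, Q a i * Q a j := by
      rw [Finset.mul_sum]
      exact Finset.sum_congr rfl fun a _ => by ring
    rw [h3, hQorth i j]
    by_cases h : i = j
    · subst h; simp
    · simp [h]
  have hlamnn : ∀ i, 0 ≤ lam i := fun i =>
    (Matrix.posSemidef_self_mul_conjTranspose A).eigenvalues_nonneg i
  have hsv : ∀ i, singVal A i ^ 2 = lam i := fun i => Real.sq_sqrt (hlamnn i)
  have hw0 : ∀ i, singVal A i = 0 → w i = 0 := by
    intro i hi
    have hl : lam i = 0 := by rw [← hsv i, hi]; norm_num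
    have h := hw i i
    rw [if_pos rfl, hl] at h
    funext b
    have hnn : ∀ b' ∈ Finset.univ, (0:ℝ) ≤ w i b' * w i b' := fun b' _ => mul_self_nonneg _
    have := (Finset.sum_eq_zero_iff_of_nonneg hnn).mp h b (Finset.mem_univ b)
    exact mul_self_eq_zero.mp this
  refine ⟨Q, fun i => if singVal A i = 0 then 0 else (singVal A i)⁻¹ • w i, hQ1, hQ2, ?_, ?_, ?_⟩
  · intro i j
    dsimp only
    by_cases hi : singVal A i = 0
    · rw [if_pos hi, zero_dotProduct]
      by_cases h : i = j
      · rw [if_pos h, if_pos hi]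
      · rw [if_neg h]
    · by_cases hj : singVal A j = 0
      · rw [if_neg hi, if_pos hj, dotProduct_zero]
        by_cases h : i = j
        · exfalso; subst h; exact hi hj
        · rw [if_neg h]
      · rw [if_neg hi, if_neg hj]
        rw [smul_dotProduct, dotProduct_smul, hw i j]
        by_cases h : i = j
        · subst h
          rw [if_pos rfl, if_neg hi, ← hsv i]
          field_simp
          rw [if_pos trivial, smul_eq_mul, smul_eq_mul, one_div, ← mul_assoc, ← sq, ← mul_pow, inv_mul_cancel₀ hi, one_pow]
        · rw [if_neg h, if_neg h]
          simp
  · intro i hi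
    dsimp only
    rw [if_pos hi]
  · intro a b
    have hterm : ∀ i, singVal A i * Q a i *
        (if singVal A i = 0 then (0:Fin q → ℝ) else (singVal A i)⁻¹ • w i) b
        = Q a i * w i b := by
      intro i
      by_cases hi : singVal A i = 0
      · rw [if_pos hi, hi, hw0 i hi]
        simp
      · rw [if_neg hi]
        simp only [Pi.smul_apply, smul_eq_mul]
        field_simp
    rw [Finset.sum_congr rfl fun i _ => hterm i]
    have h1 : ∀ i, Q a i * w i b = ∑ c, A c b * (Q a i * Q c i) := by
      intro i
      rw [hwdef, Finset.mul_sum]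
      exact Finset.sum_congr rfl fun c _ => by ring
    rw [Finset.sum_congr rfl fun i _ => h1 i, Finset.sum_comm]
    have h2 : ∀ c, ∑ i, A c b * (Q a i * Q c i) = A c b * (if a = c then 1 else 0) := by
      intro c
      rw [← Finset.mul_sum, hQcomp a c]
    rw [Finset.sum_congr rfl fun c _ => h2 c]
    rw [Finset.sum_eq_single a]
    · simp
    · intro c _ hc; rw [if_neg (Ne.symm hc)]; ring
    · intro h; exact absurd (Finset.mem_univ a) h



lemma schattenNorm_eq_lpnorm {n q : ℕ} (r : ℝ≥0∞) (A : Matrix (Fin n) (Fin q) ℝ) :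
    schattenNorm r A = lpnorm r (singVal A) := rfl

/-- Frobenius inner product. -/
def inn {n q : ℕ} (A B : Matrix (Fin n) (Fin q) ℝ) : ℝ := ∑ i, ∑ j, A i j * B i j

lemma singVal_nonneg {n q : ℕ} (A : Matrix (Fin n) (Fin q) ℝ) (i : Fin n) :
    0 ≤ singVal A i := Real.sqrt_nonneg _

lemma lpnorm_nonneg {m : ℕ} (r : ℝ≥0∞) (x : Fin m → ℝ) (hx : ∀ i, 0 ≤ x i) :
    0 ≤ lpnorm r x := by
  unfold lpnorm
  split
  · exact Real.iSup_nonneg hx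
  · exact Real.rpow_nonneg
      (Finset.sum_nonneg fun i _ => Real.rpow_nonneg (hx i) _) _

lemma schattenNorm_nonneg {n q : ℕ} (r : ℝ≥0∞) (A : Matrix (Fin n) (Fin q) ℝ) :
    0 ≤ schattenNorm r A :=
  lpnorm_nonneg r _ (singVal_nonneg A)

lemma one_le_conj {p pstar : ℝ≥0∞} (hpq : 1 / p + 1 / pstar = 1) : 1 ≤ pstar := by
  have h : 1 / pstar ≤ 1 := le_of_le_of_eq (le_add_self) hpq
  rw [one_div] at h
  exact ENNReal.inv_le_one.mp h





/-- permutation invariance of lpnorm -/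
lemma lpnorm_perm {m : ℕ} (r : ℝ≥0∞) (x : Fin m → ℝ) (e : Equiv.Perm (Fin m)) :
    lpnorm r (x ∘ e) = lpnorm r x := by
  unfold lpnorm
  split
  · exact e.iSup_comp (g := x)
  · congr 1
    exact Equiv.sum_comp e fun i => x i ^ _



lemma col_orth {n : ℕ} {Q : Matrix (Fin n) (Fin n) ℝ} (h : Qᵀ * Q = 1) (i j : Fin n) :
    ∑ a, Q a i * Q a j = if i = j then (1:ℝ) else 0 := by
  have h1 := congrFun (congrFun h i) j
  rw [Matrix.mul_apply] at h1
  have h2 : ∑ a, Q a i * Q a j = ∑ a, Qᵀ i a * Q a j :=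
    Finset.sum_congr rfl fun a _ => by rw [Matrix.transpose_apply]
  rw [h2, h1, Matrix.one_apply]

lemma sum_swap4 {α β γ δ : Type*} [Fintype α] [Fintype β] [Fintype γ] [Fintype δ]
    (f : α → β → γ → δ → ℝ) :
    ∑ a, ∑ b, ∑ i, ∑ j, f a b i j = ∑ i, ∑ j, ∑ a, ∑ b, f a b i j := by
  calc ∑ a, ∑ b, ∑ i, ∑ j, f a b i j
      = ∑ a, ∑ i, ∑ b, ∑ j, f a b i j :=
        Finset.sum_congr rfl fun a _ => Finset.sum_comm
    _ = ∑ i, ∑ a, ∑ b, ∑ j, f a b i j := Finset.sum_comm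
    _ = ∑ i, ∑ a, ∑ j, ∑ b, f a b i j :=
        Finset.sum_congr rfl fun i _ => Finset.sum_congr rfl fun a _ => Finset.sum_comm
    _ = ∑ i, ∑ j, ∑ a, ∑ b, f a b i j :=
        Finset.sum_congr rfl fun i _ => Finset.sum_comm

/-- von Neumann trace inequality + Hölder: the master inequality. -/
lemma traceIneq {n q : ℕ} (r rs : ℝ≥0∞) (hr : 1 ≤ r) (hc : 1 / r + 1 / rs = 1)
    (A B : Matrix (Fin n) (Fin q) ℝ) :
    inn A B ≤ schattenNorm rs A * schattenNorm r B := by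
  classical
  obtain ⟨QA, vA, hQA1, hQA2, hvA, hvA0, hdecA⟩ := svd A
  obtain ⟨QB, vB, hQB1, hQB2, hvB, hvB0, hdecB⟩ := svd B
  set sA : Fin n → ℝ := singVal A with hsA
  set sB : Fin n → ℝ := singVal B with hsB
  set M : Fin n → Fin n → ℝ := fun i j => ∑ a, QA a i * QB a j with hMdef
  set N : Fin n → Fin n → ℝ := fun i j => ∑ b, vA i b * vB j b with hNdef
  -- key trace identity
  have hkey : inn A B = ∑ i, ∑ j, (sA i * sB j) * (M i j * N i j) := by
    have lhs : inn A B = ∑ a, ∑ b, ∑ i, ∑ j,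
        (sA i * QA a i * vA i b) * (sB j * QB a j * vB j b) := by
      unfold inn
      refine Finset.sum_congr rfl fun a _ => Finset.sum_congr rfl fun b _ => ?_
      rw [hdecA a b, hdecB a b, Finset.sum_mul_sum]
    have rhs : ∀ i j, (sA i * sB j) * (M i j * N i j)
        = ∑ a, ∑ b, (sA i * QA a i * vA i b) * (sB j * QB a j * vB j b) := by
      intro i j
      rw [hMdef, hNdef]
      dsimp only
      rw [Finset.sum_mul_sum]
      rw [Finset.mul_sum]
      refine Finset.sum_congr rfl fun a _ => ?_
      rw [Finset.mul_sum]
      refine Finset.sum_congr rfl fun b _ => by ring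
    rw [lhs, sum_swap4]
    exact Finset.sum_congr rfl fun i _ => Finset.sum_congr rfl fun j _ => (rhs i j).symm
  -- Bessel bounds
  have hMrow : ∀ i, ∑ j, (M i j) ^ 2 ≤ 1 := by
    intro i
    have hb := bessel (fun j a => QB a j) (fun _ => (1:ℝ))
      (fun i' j' => by
        have := col_orth hQB1 i' j'
        simpa [dotProduct] using this)
      (fun _ => Or.inr rfl) (fun a => QA a i)
    have hxx : dotProduct (fun a => QA a i) (fun a => QA a i) = 1 := by
      have := col_orth hQA1 i i
      simpa [dotProduct] using this
    rw [hxx] at hb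
    exact hb
  have hMcol : ∀ j, ∑ i, (M i j) ^ 2 ≤ 1 := by
    intro j
    have hb := bessel (fun i a => QA a i) (fun _ => (1:ℝ))
      (fun i' j' => by
        have := col_orth hQA1 i' j'
        simpa [dotProduct] using this)
      (fun _ => Or.inr rfl) (fun a => QB a j)
    have hxx : dotProduct (fun a => QB a j) (fun a => QB a j) = 1 := by
      have := col_orth hQB1 j j
      simpa [dotProduct] using this
    rw [hxx] at hb
    calc ∑ i, (M i j) ^ 2
        = ∑ i, (dotProduct (fun a => QB a j) (fun a => QA a i)) ^ 2 := by
          refine Finset.sum_congr rfl fun i _ => ?_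
          congr 1
          rw [hMdef]
          simp only [dotProduct]
          exact Finset.sum_congr rfl fun a _ => by ring
      _ ≤ 1 := hb
  have hNrow : ∀ i, ∑ j, (N i j) ^ 2 ≤ 1 := by
    intro i
    have hb := bessel vB (fun j => if sB j = 0 then 0 else 1)
      (fun i' j' => hvB i' j')
      (fun j => by by_cases h : sB j = 0 <;> simp [h]) (vA i)
    have hxx : dotProduct (vA i) (vA i) ≤ 1 := by
      rw [hvA i i, if_pos rfl]
      by_cases h : sA i = 0 <;> simp [h]
    exact le_trans hb hxx
  have hNcol : ∀ j, ∑ i, (N i j) ^ 2 ≤ 1 := by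
    intro j
    have hb := bessel vA (fun i => if sA i = 0 then 0 else 1)
      (fun i' j' => hvA i' j')
      (fun i => by by_cases h : sA i = 0 <;> simp [h]) (vB j)
    have hxx : dotProduct (vB j) (vB j) ≤ 1 := by
      rw [hvB j j, if_pos rfl]
      by_cases h : sB j = 0 <;> simp [h]
    calc ∑ i, (N i j) ^ 2
        = ∑ i, (dotProduct (vB j) (vA i)) ^ 2 := by
          refine Finset.sum_congr rfl fun i _ => ?_
          congr 1
          rw [hNdef]
          simp only [dotProduct]
          exact Finset.sum_congr rfl fun b _ => by ring
      _ ≤ 1 := le_trans hb hxx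
  -- the substochastic kernel
  have habs : ∀ i j, |M i j * N i j| ≤ ((M i j) ^ 2 + (N i j) ^ 2) / 2 := by
    intro i j
    rw [abs_mul]
    nlinarith [sq_nonneg (|M i j| - |N i j|), sq_abs (M i j), sq_abs (N i j),
      abs_nonneg (M i j), abs_nonneg (N i j)]
  have hDrow : ∀ i, ∑ j, |M i j * N i j| ≤ 1 := by
    intro i
    calc ∑ j, |M i j * N i j| ≤ ∑ j, ((M i j) ^ 2 + (N i j) ^ 2) / 2 :=
          Finset.sum_le_sum fun j _ => habs i j
      _ = (∑ j, (M i j) ^ 2 + ∑ j, (N i j) ^ 2) / 2 := by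
          rw [← Finset.sum_add_distrib, Finset.sum_div]
      _ ≤ 1 := by
          have := hMrow i; have := hNrow i; linarith
  have hDcol : ∀ j, ∑ i, |M i j * N i j| ≤ 1 := by
    intro j
    calc ∑ i, |M i j * N i j| ≤ ∑ i, ((M i j) ^ 2 + (N i j) ^ 2) / 2 :=
          Finset.sum_le_sum fun i _ => habs i j
      _ = (∑ i, (M i j) ^ 2 + ∑ i, (N i j) ^ 2) / 2 := by
          rw [← Finset.sum_add_distrib, Finset.sum_div]
      _ ≤ 1 := by
          have := hMcol j; have := hNcol j; linarith
  -- sorting permutations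
  set σ : Equiv.Perm (Fin n) := Tuple.sort (fun i => -sA i) with hσdef
  set τ : Equiv.Perm (Fin n) := Tuple.sort (fun i => -sB i) with hτdef
  have hσanti : ∀ k l : Fin n, k ≤ l → sA (σ l) ≤ sA (σ k) := by
    intro k l h
    have := Tuple.monotone_sort (fun i => -sA i) h
    simpa [hσdef] using this
  have hτanti : ∀ k l : Fin n, k ≤ l → sB (τ l) ≤ sB (τ k) := by
    intro k l h
    have := Tuple.monotone_sort (fun i => -sB i) h
    simpa [hτdef] using this
  -- extensions to ℕ
  set s' : ℕ → ℝ := fun k => if h : k < n then sA (σ ⟨k, h⟩) else 0 with hs'def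
  set t' : ℕ → ℝ := fun k => if h : k < n then sB (τ ⟨k, h⟩) else 0 with ht'def
  set D' : ℕ → ℕ → ℝ := fun k l =>
    if h : k < n then if h' : l < n then
      |M (σ ⟨k, h⟩) (τ ⟨l, h'⟩) * N (σ ⟨k, h⟩) (τ ⟨l, h'⟩)| else 0 else 0 with hD'def
  have hsAnn : ∀ i, 0 ≤ sA i := fun i => singVal_nonneg A i
  have hsBnn : ∀ i, 0 ≤ sB i := fun i => singVal_nonneg B i
  have hs'0 : s' n = 0 := by simp [hs'def]
  have ht'0 : t' n = 0 := by simp [ht'def]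
  have hs'anti : Antitone s' := by
    intro k l hkl
    rw [hs'def]
    dsimp only
    by_cases hl : l < n
    · have hk : k < n := lt_of_le_of_lt hkl hl
      rw [dif_pos hl, dif_pos hk]
      exact hσanti ⟨k, hk⟩ ⟨l, hl⟩ hkl
    · rw [dif_neg hl]
      by_cases hk : k < n
      · rw [dif_pos hk]; exact hsAnn _
      · rw [dif_neg hk]
  have ht'anti : Antitone t' := by
    intro k l hkl
    rw [ht'def]
    dsimp only
    by_cases hl : l < n
    · have hk : k < n := lt_of_le_of_lt hkl hl
      rw [dif_pos hl, dif_pos hk]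
      exact hτanti ⟨k, hk⟩ ⟨l, hl⟩ hkl
    · rw [dif_neg hl]
      by_cases hk : k < n
      · rw [dif_pos hk]; exact hsBnn _
      · rw [dif_neg hk]
  have hD'nn : ∀ k l, 0 ≤ D' k l := by
    intro k l
    rw [hD'def]
    dsimp only
    by_cases hk : k < n
    · rw [dif_pos hk]
      by_cases hl : l < n
      · rw [dif_pos hl]; exact abs_nonneg _
      · rw [dif_neg hl]
    · rw [dif_neg hk]
  have hD'e : ∀ (k l : Fin n), D' ↑k ↑l = |M (σ k) (τ l) * N (σ k) (τ l)| := by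
    intro k l
    rw [hD'def]
    simp [k.isLt, l.isLt]
  have hs'e : ∀ (k : Fin n), s' ↑k = sA (σ k) := by
    intro k
    rw [hs'def]
    simp [k.isLt]
  have ht'e : ∀ (k : Fin n), t' ↑k = sB (τ k) := by
    intro k
    rw [ht'def]
    simp [k.isLt]
  have hD'row : ∀ k, ∑ l ∈ Finset.range n, D' k l ≤ 1 := by
    intro k
    by_cases hk : k < n
    · rw [← Fin.sum_univ_eq_sum_range (fun l => D' k l)]
      have he : ∀ (l : Fin n), D' k ↑l = |M (σ ⟨k, hk⟩) (τ l) * N (σ ⟨k, hk⟩) (τ l)| := by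
        intro l
        rw [hD'def]
        simp [hk, l.isLt]
      rw [Finset.sum_congr rfl fun l _ => he l]
      rw [Equiv.sum_comp τ (fun j => |M (σ ⟨k, hk⟩) j * N (σ ⟨k, hk⟩) j|)]
      exact hDrow _
    · have : ∀ l, D' k l = 0 := by
        intro l
        rw [hD'def]
        dsimp only
        rw [dif_neg hk]
      rw [Finset.sum_congr rfl fun l _ => this l]
      simp
  have hD'col : ∀ l, ∑ k ∈ Finset.range n, D' k l ≤ 1 := by
    intro l
    by_cases hl : l < n
    · rw [← Fin.sum_univ_eq_sum_range (fun k => D' k l)]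
      have he : ∀ (k : Fin n), D' ↑k l = |M (σ k) (τ ⟨l, hl⟩) * N (σ k) (τ ⟨l, hl⟩)| := by
        intro k
        rw [hD'def]
        simp [hl, k.isLt]
      rw [Finset.sum_congr rfl fun k _ => he k]
      rw [Equiv.sum_comp σ (fun i => |M i (τ ⟨l, hl⟩) * N i (τ ⟨l, hl⟩)|)]
      exact hDcol _
    · have : ∀ k, D' k l = 0 := by
        intro k
        rw [hD'def]
        dsimp only
        by_cases hk : k < n
        · rw [dif_pos hk, dif_neg hl]
        · rw [dif_neg hk]
      rw [Finset.sum_congr rfl fun k _ => this k]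
      simp
  have hmain := rearr n s' t' hs'0 ht'0 hs'anti ht'anti D' hD'nn hD'row hD'col
  -- convert LHS of hmain
  have hconv1 : ∑ k ∈ Finset.range n, ∑ l ∈ Finset.range n, D' k l * s' k * t' l
      = ∑ i, ∑ j, |M i j * N i j| * sA i * sB j := by
    rw [← Fin.sum_univ_eq_sum_range (fun k => ∑ l ∈ Finset.range n, D' k l * s' k * t' l)]
    have step : ∀ (k : Fin n), ∑ l ∈ Finset.range n, D' ↑k l * s' ↑k * t' l
        = ∑ j, |M (σ k) j * N (σ k) j| * sA (σ k) * sB j := by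
      intro k
      rw [← Fin.sum_univ_eq_sum_range (fun l => D' ↑k l * s' ↑k * t' l)]
      have he : ∀ (l : Fin n), D' ↑k ↑l * s' ↑k * t' ↑l
          = |M (σ k) (τ l) * N (σ k) (τ l)| * sA (σ k) * sB (τ l) := by
        intro l
        rw [hD'e k l, hs'e k, ht'e l]
      rw [Finset.sum_congr rfl fun l _ => he l]
      exact Equiv.sum_comp τ (fun j => |M (σ k) j * N (σ k) j| * sA (σ k) * sB j)
    rw [Finset.sum_congr rfl fun k _ => step k]
    exact Equiv.sum_comp σ (fun i => ∑ j, |M i j * N i j| * sA i * sB j)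
  -- convert RHS of hmain and apply Hölder
  have hconv2 : ∑ k ∈ Finset.range n, s' k * t' k
      = ∑ k : Fin n, sA (σ k) * sB (τ k) := by
    rw [← Fin.sum_univ_eq_sum_range (fun k => s' k * t' k)]
    exact Finset.sum_congr rfl fun k _ => by rw [hs'e k, ht'e k]
  have hqp : 1 / rs + 1 / r = 1 := by rw [add_comm]; exact hc
  have hhold : ∑ k : Fin n, sA (σ k) * sB (τ k)
      ≤ schattenNorm rs A * schattenNorm r B := by
    have := vecHolder rs r (one_le_conj hc) hqp (fun k => sA (σ k)) (fun k => sB (τ k))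
      (fun k => hsAnn _) (fun k => hsBnn _)
    calc ∑ k : Fin n, sA (σ k) * sB (τ k)
        ≤ lpnorm rs (fun k => sA (σ k)) * lpnorm r (fun k => sB (τ k)) := this
      _ = lpnorm rs sA * lpnorm r sB := by
          rw [show (fun k => sA (σ k)) = sA ∘ ⇑σ from rfl,
            show (fun k => sB (τ k)) = sB ∘ ⇑τ from rfl,
            lpnorm_perm rs sA σ, lpnorm_perm r sB τ]
      _ = schattenNorm rs A * schattenNorm r B := by
          rw [schattenNorm_eq_lpnorm, schattenNorm_eq_lpnorm]
  -- put everything together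
  rw [hkey]
  calc ∑ i, ∑ j, (sA i * sB j) * (M i j * N i j)
      ≤ ∑ i, ∑ j, |M i j * N i j| * sA i * sB j := by
        refine Finset.sum_le_sum fun i _ => Finset.sum_le_sum fun j _ => ?_
        have h1 : (sA i * sB j) * (M i j * N i j) ≤ (sA i * sB j) * |M i j * N i j| :=
          mul_le_mul_of_nonneg_left (le_abs_self _) (mul_nonneg (hsAnn i) (hsBnn j))
        calc (sA i * sB j) * (M i j * N i j) ≤ (sA i * sB j) * |M i j * N i j| := h1
          _ = |M i j * N i j| * sA i * sB j := by ring
    _ = ∑ k ∈ Finset.range n, ∑ l ∈ Finset.range n, D' k l * s' k * t' l := hconv1.symm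
    _ ≤ ∑ k ∈ Finset.range n, s' k * t' k := hmain
    _ = ∑ k : Fin n, sA (σ k) * sB (τ k) := hconv2
    _ ≤ schattenNorm rs A * schattenNorm r B := hhold


open Polynomial in
lemma charpoly_conj {k : ℕ} (P R : Matrix (Fin k) (Fin k) ℝ)
    (h1 : Pᵀ * P = 1) (h2 : P * Pᵀ = 1) :
    (P * R * Pᵀ).charpoly = R.charpoly := by
  have hmap1 : (P.map C) * (Pᵀ.map C) = 1 := by
    rw [← Matrix.map_mul, h2]
    exact Matrix.map_one _ (map_zero C) (map_one C)
  have hcm : charmatrix (P * R * Pᵀ) = (P.map C) * charmatrix R * (Pᵀ.map C) := by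
    unfold charmatrix
    rw [Matrix.mul_sub, Matrix.sub_mul]
    congr 1
    · -- scalar part
      have hscal : (P.map C) * Matrix.scalar (Fin k) (X : ℝ[X])
          = Matrix.scalar (Fin k) (X : ℝ[X]) * (P.map C) :=
        (Matrix.scalar_commute (X : ℝ[X]) (fun r' => Commute.all _ _) (P.map C)).symm
      rw [hscal, Matrix.mul_assoc, hmap1, Matrix.mul_one]
    · -- map part
      rw [RingHom.mapMatrix_apply, RingHom.mapMatrix_apply, ← Matrix.map_mul, ← Matrix.map_mul]
  unfold Matrix.charpoly
  rw [hcm, Matrix.det_mul, Matrix.det_mul]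
  have hdet : (P.map C).det * (Pᵀ.map C).det = 1 := by
    rw [← Matrix.det_mul, hmap1, Matrix.det_one]
  calc (P.map C).det * (charmatrix R).det * (Pᵀ.map C).det
      = ((P.map C).det * (Pᵀ.map C).det) * (charmatrix R).det := by ring
    _ = (charmatrix R).det := by rw [hdet, one_mul]

lemma herm_spectral {k : ℕ} (M : Matrix (Fin k) (Fin k) ℝ) (hM : M.IsHermitian) :
    ∃ Q : Matrix (Fin k) (Fin k) ℝ, Qᵀ * Q = 1 ∧ Q * Qᵀ = 1 ∧
      M = Q * Matrix.diagonal hM.eigenvalues * Qᵀ := by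
  set Q : Matrix (Fin k) (Fin k) ℝ :=
    (Matrix.IsHermitian.eigenvectorUnitary hM : Matrix (Fin k) (Fin k) ℝ) with hQdef
  have hstarQ : star Q = Qᵀ := by
    ext i j
    simp [Matrix.star_apply]
  refine ⟨Q, ?_, ?_, ?_⟩
  · rw [← hstarQ]
    exact Matrix.mem_unitaryGroup_iff'.mp (Matrix.IsHermitian.eigenvectorUnitary hM).2
  · rw [← hstarQ]
    exact Matrix.mem_unitaryGroup_iff.mp (Matrix.IsHermitian.eigenvectorUnitary hM).2
  · rw [← hstarQ]
    have := hM.spectral_theorem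
    simpa [RCLike.ofReal_real_eq_id] using this

open Polynomial in
lemma eigMultiset {k : ℕ} (M : Matrix (Fin k) (Fin k) ℝ) (hM : M.IsHermitian)
    (Q : Matrix (Fin k) (Fin k) ℝ) (hQ1 : Qᵀ * Q = 1) (hQ2 : Q * Qᵀ = 1)
    (μ : Fin k → ℝ) (heq : M = Q * Matrix.diagonal μ * Qᵀ) :
    Multiset.map hM.eigenvalues Finset.univ.val = Multiset.map μ Finset.univ.val := by
  have hdiagcp : ∀ f : Fin k → ℝ, (Matrix.diagonal f).charpoly
      = (Multiset.map (fun a => X - C a) (Multiset.map f Finset.univ.val)).prod := by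
    intro f
    rw [Matrix.charpoly_of_upperTriangular _ (Matrix.blockTriangular_diagonal f)]
    rw [Multiset.map_map]
    rw [Finset.prod_eq_multiset_prod]
    refine congrArg _ (Multiset.map_congr rfl fun i _ => ?_)
    rw [Matrix.diagonal_apply_eq]
    rfl
  obtain ⟨Q', hQ'1, hQ'2, hspec⟩ := herm_spectral M hM
  have h1 : M.charpoly = (Matrix.diagonal μ).charpoly := by
    rw [heq]
    exact charpoly_conj Q _ hQ1 hQ2
  have h2 : M.charpoly = (Matrix.diagonal hM.eigenvalues).charpoly := by
    conv_lhs => rw [hspec]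
    exact charpoly_conj Q' _ hQ'1 hQ'2
  have h3 : (Multiset.map (fun a => X - C a) (Multiset.map hM.eigenvalues Finset.univ.val)).prod
      = (Multiset.map (fun a => X - C a) (Multiset.map μ Finset.univ.val)).prod := by
    rw [← hdiagcp, ← hdiagcp, ← h1, ← h2]
  have h4 := congrArg Polynomial.roots h3
  rwa [roots_multiset_prod_X_sub_C, roots_multiset_prod_X_sub_C] at h4

lemma lpnorm_congr_multiset {m : ℕ} (r : ℝ≥0∞) (x y : Fin m → ℝ)
    (h : Multiset.map x Finset.univ.val = Multiset.map y Finset.univ.val) :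
    lpnorm r x = lpnorm r y := by
  unfold lpnorm
  split
  · rcases Nat.eq_zero_or_pos m with hm | hm
    · subst hm
      rw [Real.iSup_of_isEmpty, Real.iSup_of_isEmpty]
    · have : Nonempty (Fin m) := ⟨⟨0, hm⟩⟩
      have hmem : ∀ (f g : Fin m → ℝ),
          Multiset.map f Finset.univ.val = Multiset.map g Finset.univ.val →
          ∀ i, f i ≤ ⨆ j, g j := by
        intro f g hfg i
        have hi : f i ∈ Multiset.map g Finset.univ.val := by
          rw [← hfg]
          exact Multiset.mem_map_of_mem f (Finset.mem_def.mp (Finset.mem_univ i))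
        obtain ⟨j, _, hj⟩ := Multiset.mem_map.mp hi
        rw [← hj]
        exact le_ciSup (Set.Finite.bddAbove (Set.finite_range g)) j
      exact le_antisymm (ciSup_le fun i => hmem x y h i) (ciSup_le fun i => hmem y x h.symm i)
  · have hsum : ∑ i, x i ^ r.toReal = ∑ i, y i ^ r.toReal := by
      have hh := congrArg (fun s => (Multiset.map (fun a => a ^ r.toReal) s).sum) h
      simp only [Multiset.map_map, Function.comp] at hh
      rw [Finset.sum_eq_multiset_sum, Finset.sum_eq_multiset_sum]
      exact hh
    rw [hsum]

/-- Attainment in the dual ball. -/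
lemma attain {n q : ℕ} (r rs : ℝ≥0∞) (hr : 1 ≤ r) (hc : 1 / r + 1 / rs = 1)
    (W : Matrix (Fin n) (Fin q) ℝ) :
    ∃ U : Matrix (Fin n) (Fin q) ℝ, schattenNorm rs U ≤ 1 ∧ inn U W = schattenNorm r W := by
  classical
  obtain ⟨Q, v, hQ1, hQ2, hv, hv0, hdec⟩ := svd W
  set s : Fin n → ℝ := singVal W with hs
  obtain ⟨d, hd0, hdz, hdnorm, hdsum⟩ := vecDual r rs hr hc s (fun i => singVal_nonneg W i)
  set U : Matrix (Fin n) (Fin q) ℝ := fun a b => ∑ i, d i * Q a i * v i b with hUdef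
  have hUe : ∀ a b, U a b = ∑ i, d i * Q a i * v i b := fun a b => rfl
  refine ⟨U, ?_, ?_⟩
  · -- Schatten norm of U is the lp norm of d
    have hUU : U * Uᴴ = Q * Matrix.diagonal (fun i => d i ^ 2) * Qᵀ := by
      ext a c
      rw [Matrix.mul_apply]
      have hlhs : ∑ b, U a b * Uᴴ b c = ∑ i, ∑ j, (d i * Q a i) * (d j * Q c j) *
          (∑ b, v i b * v j b) := by
        have h1 : ∀ b, U a b * Uᴴ b c = ∑ i, ∑ j,
            ((d i * Q a i * v i b) * (d j * Q c j * v j b)) := by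
          intro b
          rw [Matrix.conjTranspose_apply, hUe, hUe]
          simp only [star_trivial]
          rw [Finset.sum_mul_sum]
        rw [Finset.sum_congr rfl fun b _ => h1 b]
        rw [show (∑ b, ∑ i, ∑ j, ((d i * Q a i * v i b) * (d j * Q c j * v j b)))
            = ∑ i, ∑ j, ∑ b, ((d i * Q a i * v i b) * (d j * Q c j * v j b)) from by
          rw [Finset.sum_comm]
          exact Finset.sum_congr rfl fun i _ => Finset.sum_comm]
        refine Finset.sum_congr rfl fun i _ => Finset.sum_congr rfl fun j _ => ?_
        rw [Finset.mul_sum]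
        exact Finset.sum_congr rfl fun b _ => by ring
      rw [hlhs]
      have hdiag : ∀ i j, (d i * Q a i) * (d j * Q c j) * (∑ b, v i b * v j b)
          = if j = i then d i ^ 2 * Q a i * Q c i else 0 := by
        intro i j
        have : (∑ b, v i b * v j b) = dotProduct (v i) (v j) := rfl
        rw [this, hv i j]
        by_cases h : i = j
        · subst h
          by_cases h2 : s i = 0
          · simp [h2, hdz i h2]
          · simp only [eq_self_iff_true, if_true, if_neg h2]
            ring
        · simp [h, Ne.symm h]
      rw [Finset.sum_congr rfl fun i _ => Finset.sum_congr rfl fun j _ => hdiag i j]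
      rw [Finset.sum_congr rfl fun i _ => Finset.sum_ite_eq' Finset.univ i
        (fun j => d i ^ 2 * Q a i * Q c i)]
      simp only [Finset.mem_univ, if_true]
      -- RHS
      rw [Matrix.mul_apply]
      refine Finset.sum_congr rfl fun i _ => ?_
      rw [Matrix.mul_diagonal, Matrix.transpose_apply]
      ring
    have hmult := eigMultiset (U * Uᴴ) (Matrix.isHermitian_mul_conjTranspose_self U)
      Q hQ1 hQ2 (fun i => d i ^ 2) hUU
    have hsv : Multiset.map (singVal U) Finset.univ.val
        = Multiset.map d Finset.univ.val := by
      unfold singVal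
      calc Multiset.map (fun i => Real.sqrt
            ((Matrix.isHermitian_mul_conjTranspose_self U).eigenvalues i)) Finset.univ.val
          = Multiset.map Real.sqrt (Multiset.map
              (Matrix.isHermitian_mul_conjTranspose_self U).eigenvalues Finset.univ.val) := by
            rw [Multiset.map_map]; rfl
        _ = Multiset.map Real.sqrt (Multiset.map (fun i => d i ^ 2) Finset.univ.val) := by
            rw [hmult]
        _ = Multiset.map d Finset.univ.val := by
            rw [Multiset.map_map]
            refine Multiset.map_congr rfl fun i _ => ?_
            exact Real.sqrt_sq (hd0 i)
    rw [schattenNorm_eq_lpnorm, lpnorm_congr_multiset rs (singVal U) d hsv]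
    exact hdnorm
  · -- the pairing
    have hkey : inn U W = ∑ i, ∑ j, (d i * s j) * ((∑ a, Q a i * Q a j) *
        (∑ b, v i b * v j b)) := by
      have lhs : inn U W = ∑ a, ∑ b, ∑ i, ∑ j,
          (d i * Q a i * v i b) * (s j * Q a j * v j b) := by
        unfold inn
        refine Finset.sum_congr rfl fun a _ => Finset.sum_congr rfl fun b _ => ?_
        rw [hUe a b, hdec a b, Finset.sum_mul_sum]
      rw [lhs, sum_swap4]
      refine Finset.sum_congr rfl fun i _ => Finset.sum_congr rfl fun j _ => ?_
      rw [Finset.sum_mul_sum, Finset.mul_sum]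
      refine Finset.sum_congr rfl fun a _ => ?_
      rw [Finset.mul_sum]
      exact Finset.sum_congr rfl fun b _ => by ring
    rw [hkey]
    have hterm : ∀ i j, (d i * s j) * ((∑ a, Q a i * Q a j) * (∑ b, v i b * v j b))
        = if j = i then d i * s i else 0 := by
      intro i j
      rw [col_orth hQ1 i j, show (∑ b, v i b * v j b) = dotProduct (v i) (v j) from rfl,
        hv i j]
      by_cases h : i = j
      · subst h
        by_cases h2 : s i = 0
        · simp [h2, hdz i h2]
        · simp only [eq_self_iff_true, if_true, if_neg h2]
          ring
      · simp [h, Ne.symm h]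
    rw [Finset.sum_congr rfl fun i _ => Finset.sum_congr rfl fun j _ => hterm i j]
    rw [Finset.sum_congr rfl fun i _ =>
      Finset.sum_ite_eq' Finset.univ i (fun _ => d i * s i)]
    simp only [Finset.mem_univ, if_true]
    rw [schattenNorm_eq_lpnorm, ← hdsum]


/- ## inner product algebra -/

lemma inn_comm {n q : ℕ} (A B : Matrix (Fin n) (Fin q) ℝ) : inn A B = inn B A := by
  unfold inn; congr 1; ext i; congr 1; ext j; ring

lemma frob_sq {n q : ℕ} (A : Matrix (Fin n) (Fin q) ℝ) : frobNorm A ^ 2 = inn A A := by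
  unfold frobNorm inn
  rw [Real.sq_sqrt (by positivity)]
  congr 1; ext i; congr 1; ext j; ring

lemma inn_self_nonneg {n q : ℕ} (A : Matrix (Fin n) (Fin q) ℝ) : 0 ≤ inn A A := by
  unfold inn
  exact Finset.sum_nonneg fun i _ => Finset.sum_nonneg fun j _ => mul_self_nonneg _

lemma inn_add_left {n q : ℕ} (A B C : Matrix (Fin n) (Fin q) ℝ) :
    inn (A + B) C = inn A C + inn B C := by
  unfold inn
  rw [← Finset.sum_add_distrib]
  congr 1; ext i
  rw [← Finset.sum_add_distrib]
  congr 1; ext j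
  simp [Matrix.add_apply]; ring

lemma inn_sub_left {n q : ℕ} (A B C : Matrix (Fin n) (Fin q) ℝ) :
    inn (A - B) C = inn A C - inn B C := by
  unfold inn
  rw [← Finset.sum_sub_distrib]
  congr 1; ext i
  rw [← Finset.sum_sub_distrib]
  congr 1; ext j
  simp [Matrix.sub_apply]; ring

lemma inn_sub_right {n q : ℕ} (A B C : Matrix (Fin n) (Fin q) ℝ) :
    inn A (B - C) = inn A B - inn A C := by
  rw [inn_comm, inn_sub_left, inn_comm B A, inn_comm C A]

lemma inn_add_right {n q : ℕ} (A B C : Matrix (Fin n) (Fin q) ℝ) :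
    inn A (B + C) = inn A B + inn A C := by
  rw [inn_comm, inn_add_left, inn_comm B A, inn_comm C A]

lemma inn_smul_left {n q : ℕ} (a : ℝ) (A B : Matrix (Fin n) (Fin q) ℝ) :
    inn (a • A) B = a * inn A B := by
  unfold inn
  rw [Finset.mul_sum]
  congr 1; ext i
  rw [Finset.mul_sum]
  congr 1; ext j
  simp [Matrix.smul_apply]; ring

lemma inn_smul_right {n q : ℕ} (a : ℝ) (A B : Matrix (Fin n) (Fin q) ℝ) :
    inn A (a • B) = a * inn A B := by
  rw [inn_comm, inn_smul_left, inn_comm B A]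

lemma inn_expand {n q : ℕ} (A B : Matrix (Fin n) (Fin q) ℝ) :
    inn (A - B) (A - B) = inn A A - 2 * inn A B + inn B B := by
  rw [inn_sub_left, inn_sub_right, inn_sub_right, inn_comm B A]; ring

end Stmt5Aux

open Stmt5Aux

/-- Let `‖·‖_{S,p}` be the Schatten `p`-norm on `n × q` matrices, `p*` its Hölder
conjugate, `σ > 0`, `c ∈ ℝ`, `ω_σ(Z) = (1/2σ)‖Z‖² + cσ` (Frobenius norm).  Then
`(‖·‖_{S,p} □ ω_σ)(Z) = ‖Z‖²/(2σ) + cσ − (σ/2)‖Π_{B_{S,p*}}(Z/σ) − Z/σ‖²`,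
where `Π_{B_{S,p*}}` is the Frobenius projection onto the unit Schatten `p*`-ball. -/
theorem stmt5 {n q : ℕ} (p pstar : ℝ≥0∞) (hp : 1 ≤ p) (hpq : 1 / p + 1 / pstar = 1)
    (σ : ℝ) (hσ : 0 < σ) (c : ℝ) (Z : Matrix (Fin n) (Fin q) ℝ)
    (P : Matrix (Fin n) (Fin q) ℝ) (hPmem : schattenNorm pstar P ≤ 1)
    (hPproj : ∀ U : Matrix (Fin n) (Fin q) ℝ, schattenNorm pstar U ≤ 1 →
      frobNorm (σ⁻¹ • Z - P) ≤ frobNorm (σ⁻¹ • Z - U)) :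
    (⨅ W : Matrix (Fin n) (Fin q) ℝ,
        ((schattenNorm p W + ((1 / (2 * σ)) * frobNorm (Z - W) ^ 2 + c * σ) : ℝ) : EReal))
      = ((frobNorm Z ^ 2 / (2 * σ) + c * σ - σ / 2 * frobNorm (P - σ⁻¹ • Z) ^ 2 : ℝ) : EReal) := by
  classical
  have hps1 : 1 ≤ pstar := one_le_conj hpq
  have hqp : 1 / pstar + 1 / p = 1 := by rw [add_comm]; exact hpq
  set x : Matrix (Fin n) (Fin q) ℝ := σ⁻¹ • Z with hxdef
  set Wstar : Matrix (Fin n) (Fin q) ℝ := Z - σ • P with hWdef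
  have hσ0 : σ ≠ 0 := ne_of_gt hσ
  have hxW : x - P = σ⁻¹ • Wstar := by
    rw [hWdef, smul_sub, smul_smul, inv_mul_cancel₀ hσ0, one_smul]
  -- Step 1 : variational inequality
  have hVI : ∀ U : Matrix (Fin n) (Fin q) ℝ, schattenNorm pstar U ≤ 1 →
      inn (x - P) U ≤ inn (x - P) P := by
    intro U hU
    have hKey : ∀ t : ℝ, 0 < t → t ≤ 1 →
        inn (x - P) (U - P) ≤ t * inn (U - P) (U - P) / 2 := by
      intro t ht0 ht1
      have hUt : schattenNorm pstar (P + t • (U - P)) ≤ 1 := by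
        obtain ⟨V, hVmem, hV⟩ := attain pstar p hps1 hqp (P + t • (U - P))
        have h1 : inn V P ≤ 1 := by
          calc inn V P ≤ schattenNorm p V * schattenNorm pstar P :=
                traceIneq pstar p hps1 hqp V P
            _ ≤ 1 := mul_le_one₀ hVmem (schattenNorm_nonneg _ _) hPmem
        have h2 : inn V U ≤ 1 := by
          calc inn V U ≤ schattenNorm p V * schattenNorm pstar U :=
                traceIneq pstar p hps1 hqp V U
            _ ≤ 1 := mul_le_one₀ hVmem (schattenNorm_nonneg _ _) hU
        rw [← hV, inn_add_right, inn_smul_right, inn_sub_right]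
        nlinarith
      have hfr := hPproj _ hUt
      have hexp : x - (P + t • (U - P)) = (x - P) - t • (U - P) := by
        abel
      have hsq : inn (x - P) (x - P) ≤
          inn (x - P - t • (U - P)) (x - P - t • (U - P)) := by
        rw [← frob_sq, ← frob_sq, ← hexp]
        have h0 : (0:ℝ) ≤ frobNorm (x - P) := Real.sqrt_nonneg _
        nlinarith [hfr]
      rw [inn_expand (x - P) (t • (U - P)), inn_smul_right, inn_smul_left, inn_smul_right] at hsq
      nlinarith [hsq]
    have hKnn : 0 ≤ inn (U - P) (U - P) := inn_self_nonneg _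
    have hle : inn (x - P) (U - P) ≤ 0 := by
      apply le_of_forall_pos_le_add
      intro ε hε
      set K := inn (U - P) (U - P)
      set t := min 1 (ε / (K + 1)) with htdef
      have ht0 : 0 < t := lt_min one_pos (by positivity)
      have ht1 : t ≤ 1 := min_le_left _ _
      have := hKey t ht0 ht1
      have htK : t * K / 2 ≤ ε := by
        have h1 : t ≤ ε / (K + 1) := min_le_right _ _
        have h2 : t * K ≤ (ε / (K + 1)) * K := by
          apply mul_le_mul_of_nonneg_right h1 hKnn
        have h3 : (ε / (K + 1)) * K ≤ ε := by
          rw [div_mul_eq_mul_div, div_le_iff₀ (by positivity)]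
          nlinarith
        linarith
      linarith
    rw [inn_sub_right] at hle
    linarith
  -- Step 2 : dual pairing bound
  have hdual : ∀ W : Matrix (Fin n) (Fin q) ℝ, inn P W ≤ schattenNorm p W := by
    intro W
    calc inn P W ≤ schattenNorm pstar P * schattenNorm p W := traceIneq p pstar hp hpq P W
      _ ≤ 1 * schattenNorm p W :=
          mul_le_mul_of_nonneg_right hPmem (schattenNorm_nonneg _ _)
      _ = schattenNorm p W := one_mul _
  -- Step 3 : attainment at Wstar
  have hkey : schattenNorm p Wstar = inn P Wstar := by
    obtain ⟨U0, hU0mem, hU0⟩ := attain p pstar hp hpq Wstar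
    have h1 := hVI U0 hU0mem
    rw [hxW, inn_smul_left, inn_smul_left] at h1
    have h2 : inn Wstar U0 ≤ inn Wstar P := by
      have hσinv : 0 < σ⁻¹ := by positivity
      exact le_of_mul_le_mul_left (by linarith) hσinv
    refine le_antisymm ?_ (hdual Wstar)
    rw [← hU0, inn_comm U0 Wstar, inn_comm P Wstar]
    exact h2
  -- the common value R
  set R : ℝ := inn P Z - σ / 2 * inn P P + c * σ with hRdef
  -- Step 4 : lower bound
  have hlow : ∀ W : Matrix (Fin n) (Fin q) ℝ,
      R ≤ schattenNorm p W + ((1 / (2 * σ)) * frobNorm (Z - W) ^ 2 + c * σ) := by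
    intro W
    have h1 : inn P W ≤ schattenNorm p W := hdual W
    have h2 : 0 ≤ inn (Z - W) (Z - W) - 2 * (σ * inn (Z - W) P) + σ * (σ * inn P P) := by
      have h0 := inn_self_nonneg (Z - W - σ • P)
      rwa [inn_expand (Z - W) (σ • P), inn_smul_right, inn_smul_left, inn_smul_right] at h0
    have h4 : 0 ≤ 1 / (2 * σ) *
        (inn (Z - W) (Z - W) - 2 * (σ * inn (Z - W) P) + σ * (σ * inn P P)) :=
      mul_nonneg (by positivity) h2
    have h5 : 1 / (2 * σ) *
          (inn (Z - W) (Z - W) - 2 * (σ * inn (Z - W) P) + σ * (σ * inn P P))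
        = 1 / (2 * σ) * inn (Z - W) (Z - W) - inn (Z - W) P + σ / 2 * inn P P := by
      field_simp
    have h3 : inn (Z - W) P = inn P Z - inn P W := by
      rw [inn_sub_left, inn_comm Z P, inn_comm W P]
    rw [h5, h3] at h4
    rw [hRdef, frob_sq]
    linarith [h1, h4]
  -- Step 5 : value at Wstar equals R
  have hval : schattenNorm p Wstar + ((1 / (2 * σ)) * frobNorm (Z - Wstar) ^ 2 + c * σ) = R := by
    have hZW : Z - Wstar = σ • P := by rw [hWdef]; abel
    rw [hkey, hZW, frob_sq, inn_smul_left, inn_smul_right, hWdef, inn_sub_right, inn_smul_right,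
      hRdef]
    field_simp
    ring
  -- Step 6 : RHS equals R
  have hrhs : frobNorm Z ^ 2 / (2 * σ) + c * σ - σ / 2 * frobNorm (P - σ⁻¹ • Z) ^ 2 = R := by
    have e1 : frobNorm (P - σ⁻¹ • Z) ^ 2
        = inn P P - 2 * (σ⁻¹ * inn P Z) + σ⁻¹ * (σ⁻¹ * inn Z Z) := by
      rw [frob_sq, inn_expand P (σ⁻¹ • Z), inn_smul_right, inn_smul_left, inn_smul_right]
    rw [frob_sq, e1, hRdef]
    field_simp
    ring
  -- conclusion
  rw [hrhs]
  apply le_antisymm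
  · exact iInf_le_of_le Wstar (by exact_mod_cast le_of_eq hval)
  · exact le_iInf fun W => by exact_mod_cast hlow W
end

section
/- Let Z ∈ R^{n×q} with singular values γ_1, …, γ_n (padding with zeros if q < n), and σ > 0. Then min over positive definite S ≻ 0 of (1/2)Tr(Zᵀ S⁻¹ Z) + (1/2)Tr(S) + (σ²/2)Tr(S⁻¹) equals ∑_{i=1}^{n} √(γ_i² + σ²), with minimizer S = (ZZᵀ + σ² Id)^{1/2}. -/
open Matrix

section
open scoped ComplexOrder

/-- The positive semidefinite square root of a positive semidefinite matrix, as defined in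
Mathlib (December 2024); the definition has since been removed from Mathlib. -/
noncomputable def Matrix.PosSemidef.sqrt {n 𝕜 : Type*} [Fintype n] [DecidableEq n] [RCLike 𝕜]
    {A : Matrix n n 𝕜} (hA : A.PosSemidef) : Matrix n n 𝕜 :=
  hA.1.eigenvectorUnitary.1 * diagonal ((↑) ∘ Real.sqrt ∘ hA.1.eigenvalues) *
    (star hA.1.eigenvectorUnitary : Matrix n n 𝕜)

end

private lemma trace_nonneg_of_psd {m : Type*} [Fintype m] [DecidableEq m]
    {M : Matrix m m ℝ} (hM : M.PosSemidef) : 0 ≤ M.trace := by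
  exact hM.trace_nonneg

/-- For `Z ∈ ℝ^{n×q}` with singular values `γ_i` (squares are the eigenvalues of
`ZZᵀ`, padded with zeros) and `σ > 0`, the minimum over positive definite `S` of
`(1/2)Tr(Zᵀ S⁻¹ Z) + (1/2)Tr(S) + (σ²/2)Tr(S⁻¹)` equals `∑ √(γ_i² + σ²)`, with
minimizer `S = (ZZᵀ + σ² Id)^{1/2}` (the positive semidefinite square root). -/
theorem stmt9 {n q : ℕ} (Z : Matrix (Fin n) (Fin q) ℝ) (σ : ℝ) (hσ : 0 < σ)
    (hps : (Z * Zᴴ + σ ^ 2 • (1 : Matrix (Fin n) (Fin n) ℝ)).PosSemidef) :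
    (∀ S : Matrix (Fin n) (Fin n) ℝ, S.PosDef →
        (∑ i, Real.sqrt ((Matrix.isHermitian_mul_conjTranspose_self Z).eigenvalues i
            + σ ^ 2))
          ≤ (1 / 2) * (Zᵀ * S⁻¹ * Z).trace + (1 / 2) * S.trace
            + (σ ^ 2 / 2) * (S⁻¹).trace)
      ∧ (1 / 2) * (Zᵀ * hps.sqrt⁻¹ * Z).trace + (1 / 2) * hps.sqrt.trace
          + (σ ^ 2 / 2) * (hps.sqrt⁻¹).trace
        = ∑ i, Real.sqrt ((Matrix.isHermitian_mul_conjTranspose_self Z).eigenvalues i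
            + σ ^ 2) := by
  set hZ := Matrix.isHermitian_mul_conjTranspose_self Z with hZdef
  set γ : Fin n → ℝ := hZ.eigenvalues with hγdef
  set A : Matrix (Fin n) (Fin n) ℝ := Z * Zᴴ + σ ^ 2 • (1 : Matrix (Fin n) (Fin n) ℝ) with hAdef
  set U : Matrix (Fin n) (Fin n) ℝ := (hZ.eigenvectorUnitary : Matrix (Fin n) (Fin n) ℝ) with hUdef
  have hU1 : U * star U = 1 := Matrix.mem_unitaryGroup_iff.mp hZ.eigenvectorUnitary.2
  have hU2 : star U * U = 1 := Matrix.mem_unitaryGroup_iff'.mp hZ.eigenvectorUnitary.2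
  have hγnn : ∀ i, 0 ≤ γ i := fun i =>
    Matrix.eigenvalues_self_mul_conjTranspose_nonneg Z i
  have hγσ : ∀ i, 0 ≤ γ i + σ ^ 2 := fun i => add_nonneg (hγnn i) (sq_nonneg σ)
  set D : Matrix (Fin n) (Fin n) ℝ := diagonal (fun i => Real.sqrt (γ i + σ ^ 2)) with hDdef
  set C : Matrix (Fin n) (Fin n) ℝ := U * D * star U with hCdef
  -- spectral theorem for A
  have hspec : Z * Zᴴ = U * diagonal γ * star U := by
    have := hZ.spectral_theorem
    simp at this ⊢
    exact this
  have hdiagsum : diagonal γ + σ ^ 2 • (1 : Matrix (Fin n) (Fin n) ℝ)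
      = diagonal (fun i => γ i + σ ^ 2) := by
    rw [smul_one_eq_diagonal, diagonal_add]
  have hAspec : A = U * diagonal (fun i => γ i + σ ^ 2) * star U := by
    have h1 : (σ ^ 2 • (1 : Matrix (Fin n) (Fin n) ℝ))
        = U * (σ ^ 2 • (1 : Matrix (Fin n) (Fin n) ℝ)) * star U := by
      rw [mul_smul_comm, mul_one, smul_mul_assoc, hU1]
    rw [hAdef, hspec]
    conv_lhs => rw [h1]
    rw [← add_mul, ← mul_add, hdiagsum]
  have hDD : D * D = diagonal (fun i => γ i + σ ^ 2) := by
    rw [hDdef, diagonal_mul_diagonal]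
    exact congrArg _ (funext fun i => Real.mul_self_sqrt (hγσ i))
  have hC2 : C ^ 2 = A := by
    rw [pow_two, hCdef, hAspec]
    have h : U * D * star U * (U * D * star U) = U * (D * ((star U * U) * (D * star U))) := by
      simp only [mul_assoc]
    rw [h, hU2, one_mul, show D * (D * star U) = (D * D) * star U from (mul_assoc _ _ _).symm,
      hDD, ← mul_assoc]
  have hCpsd : C.PosSemidef := by
    have hDpsd : D.PosSemidef := posSemidef_diagonal_iff.mpr fun i => Real.sqrt_nonneg _
    have := hDpsd.mul_mul_conjTranspose_same U
    simpa [hCdef, Matrix.star_eq_conjTranspose] using this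
  have hsqrt : hps.sqrt = C := by
    have e1 : hps.sqrt = cfc Real.sqrt A := by rw [hps.1.cfc_eq]; rfl
    have hCsa : IsSelfAdjoint C := hCpsd.1
    rw [e1, ← hC2, ← cfc_comp_pow Real.sqrt 2 C]
    conv_rhs => rw [← cfc_id' ℝ C]
    refine cfc_congr fun x hx => ?_
    have : 0 ≤ x := by
      open MatrixOrder in exact spectrum_nonneg_of_nonneg hCpsd.nonneg hx
    simp [Real.sqrt_sq this]
  have hApd : A.PosDef := by
    refine Matrix.PosDef.posSemidef_add (Matrix.posSemidef_self_mul_conjTranspose Z) ?_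
    rw [smul_one_eq_diagonal]
    exact posDef_diagonal_iff.mpr fun i => pow_pos hσ 2
  -- C is invertible
  have hdetC : IsUnit C.det := by
    have h2 : C.det ^ 2 = A.det := by rw [← det_pow, hC2]
    refine isUnit_iff_ne_zero.mpr fun h => ?_
    rw [h, zero_pow two_ne_zero] at h2
    exact hApd.det_pos.ne' h2.symm
  have hCsymm : Cᴴ = C := hCpsd.1
  -- trace of C
  have htrC : C.trace = ∑ i, Real.sqrt (γ i + σ ^ 2) := by
    rw [hCdef, trace_mul_cycle, hU2, one_mul, hDdef, trace_diagonal]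
  -- real conjTranspose is transpose
  have hZT : Zᴴ = Zᵀ := Matrix.conjTranspose_eq_transpose_of_trivial Z
  -- key trace computation
  have key : ∀ T : Matrix (Fin n) (Fin n) ℝ,
      (Zᵀ * T⁻¹ * Z).trace + σ ^ 2 * (T⁻¹).trace = (T⁻¹ * A).trace := by
    intro T
    have h1 : T⁻¹ * A = T⁻¹ * (Z * Zᴴ) + σ ^ 2 • T⁻¹ := by
      rw [hAdef, mul_add, Matrix.mul_smul, mul_one]
    rw [h1, trace_add, trace_smul, smul_eq_mul]
    congr 1
    rw [hZT, trace_mul_cycle, ← hZT]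
    exact (trace_mul_comm _ _)
  constructor
  · intro S hS
    have hSdet : IsUnit S.det := (Matrix.isUnit_iff_isUnit_det S).mp hS.isUnit
    have hSS : S * S⁻¹ = 1 := mul_nonsing_inv _ hSdet
    have hSS' : S⁻¹ * S = 1 := nonsing_inv_mul _ hSdet
    have hSsym : Sᴴ = S := hS.isHermitian
    have hMpsd : ((C - S)ᴴ * S⁻¹ * (C - S)).PosSemidef :=
      hS.posSemidef.inv.conjTranspose_mul_mul_same _
    have hnn := trace_nonneg_of_psd hMpsd
    have hexp : (C - S)ᴴ * S⁻¹ * (C - S)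
        = C * S⁻¹ * C - C * (S⁻¹ * S) - S * S⁻¹ * C + S * (S⁻¹ * S) := by
      rw [conjTranspose_sub, hCsymm, hSsym]
      noncomm_ring
    rw [hexp, hSS, hSS'] at hnn
    simp only [mul_one, one_mul] at hnn
    have htr1 : (C * S⁻¹ * C).trace = (S⁻¹ * A).trace := by
      rw [trace_mul_cycle, show C * C = A from by rw [← pow_two, hC2], trace_mul_comm]
    rw [trace_add, trace_sub, trace_sub, htr1] at hnn
    have hk := key S
    rw [htrC.symm]
    linarith [hnn, hk]
  · -- equality at C
    have hCinvA : C⁻¹ * A = C := by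
      rw [← hC2, pow_two, ← mul_assoc, nonsing_inv_mul _ hdetC, one_mul]
    rw [hsqrt]
    have h1 := key C
    rw [hCinvA] at h1
    rw [htrC.symm]
    linarith [h1]
end

section
/- Let Σ^emp be a symmetric positive semidefinite n×n matrix with eigendecomposition Σ^emp = U diag(σ_1², …, σ_n²) Uᵀ, and σ_min > 0. Then the minimizer over precision matrices Θ with 0 ≺ Θ ⪯ (1/σ_min²) Id of the function ⟨Σ^emp, Θ⟩ − log det Θ is Θ̂ = U diag(1/(σ_i² ∨ σ_min²)) Uᵀ. -/
open Matrix

variable {n : ℕ}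

lemma my_posDef_conj {M N : Matrix (Fin n) (Fin n) ℝ} (hM : M.PosDef)
    (hN : IsUnit N.det) : (N * M * Nᴴ).PosDef := by
  refine .of_dotProduct_mulVec_pos (isHermitian_mul_mul_conjTranspose N hM.1) fun x hx => ?_
  have hx' : Nᴴ *ᵥ x ≠ 0 := by
    intro h
    apply hx
    have hdet' : IsUnit (Nᵀ).det := by simpa [Matrix.det_transpose] using hN
    have h2 := congrArg (fun v => (Nᴴ)⁻¹ *ᵥ v) h
    simpa [Matrix.mulVec_mulVec, Matrix.nonsing_inv_mul _ hdet', Matrix.one_mulVec] using h2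
  simpa only [star_mulVec, dotProduct_mulVec, vecMul_vecMul, conjTranspose_conjTranspose] using hM.dotProduct_mulVec_pos hx'

lemma my_posDef_diag_pos {M : Matrix (Fin n) (Fin n) ℝ} (hM : M.PosDef) (i : Fin n) :
    0 < M i i := by
  have := hM.dotProduct_mulVec_pos (x := Pi.single i (1:ℝ)) (by intro h; simpa using congrFun h i)
  simpa using this

lemma my_posSemidef_diag_nonneg {M : Matrix (Fin n) (Fin n) ℝ} (hM : M.PosSemidef) (i : Fin n) :
    0 ≤ M i i := by
  have := hM.dotProduct_mulVec_nonneg (Pi.single i 1)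
  simpa using this

lemma my_logdet_le {X : Matrix (Fin n) (Fin n) ℝ} (hX : X.PosDef) :
    Real.log X.det ≤ X.trace - n := by
  have heig := hX.eigenvalues_pos
  have hdet : X.det = ∏ i, hX.1.eigenvalues i := by
    simpa [RCLike.ofReal_real_eq_id] using hX.1.det_eq_prod_eigenvalues
  have htr : X.trace = ∑ i, hX.1.eigenvalues i := by
    conv_lhs => rw [hX.1.spectral_theorem, Unitary.conjStarAlgAut_apply]
    rw [trace_mul_cycle]
    simp [Matrix.mem_unitaryGroup_iff'.mp hX.1.eigenvectorUnitary.2, RCLike.ofReal_real_eq_id,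
      Matrix.trace_diagonal]
  rw [hdet, htr, Real.log_prod (fun i _ => (heig i).ne')]
  calc ∑ i, Real.log (hX.1.eigenvalues i) ≤ ∑ i, (hX.1.eigenvalues i - 1) :=
        Finset.sum_le_sum fun i _ => Real.log_le_sub_one_of_pos (heig i)
    _ = (∑ i, hX.1.eigenvalues i) - n := by
        rw [Finset.sum_sub_distrib]
        simp

section conj
variable {U : Matrix (Fin n) (Fin n) ℝ}

lemma my_conj_mul (hU1 : star U * U = 1) (e f : Fin n → ℝ) :
    (U * diagonal e * star U) * (U * diagonal f * star U)
      = U * diagonal (fun i => e i * f i) * star U := by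
  have h : (U * diagonal e * star U) * (U * diagonal f * star U)
      = U * (diagonal e * (star U * U) * diagonal f) * star U := by
    simp only [Matrix.mul_assoc]
  rw [h, hU1, mul_one, diagonal_mul_diagonal]

lemma my_conj_trace (hU1 : star U * U = 1) (e : Fin n → ℝ) :
    (U * diagonal e * star U).trace = ∑ i, e i := by
  rw [trace_mul_cycle, hU1, one_mul, trace_diagonal]

lemma my_conj_trace_mul (e : Fin n → ℝ) (Θ : Matrix (Fin n) (Fin n) ℝ) :
    ((U * diagonal e * star U) * Θ).trace = ∑ i, e i * (star U * Θ * U) i i := by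
  have h1 : (U * diagonal e * star U) * Θ = (U * diagonal e) * (star U * Θ) := by
    simp only [Matrix.mul_assoc]
  rw [h1, trace_mul_comm]
  have h2 : (star U * Θ) * (U * diagonal e) = (star U * Θ * U) * diagonal e := by
    simp only [Matrix.mul_assoc]
  rw [h2]
  simp [Matrix.trace, Matrix.diag, Matrix.mul_diagonal, mul_comm]

lemma my_conj_det (hU2 : U * star U = 1) (e : Fin n → ℝ) :
    (U * diagonal e * star U).det = ∏ i, e i := by
  have hd : U.det * (star U).det = 1 := by rw [← det_mul, hU2, det_one]
  rw [det_mul, det_mul, det_diagonal, mul_right_comm, hd, one_mul]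
end conj
/-- Let `Σ^emp` be symmetric positive semidefinite with eigenvalues `σ_i²` and
eigenvector matrix `U`, and `σ_min > 0`.  The minimizer over precision matrices
`0 ≺ Θ ⪯ (1/σ_min²) Id` of `⟨Σ^emp, Θ⟩ − log det Θ` is
`Θ̂ = U diag(1/(σ_i² ∨ σ_min²)) Uᵀ`. -/
theorem stmt14 {n : ℕ} (Semp : Matrix (Fin n) (Fin n) ℝ) (hSemp : Semp.PosSemidef)
    (σmin : ℝ) (hσ : 0 < σmin) :
    let U : Matrix (Fin n) (Fin n) ℝ := hSemp.1.eigenvectorUnitary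
    let Θhat : Matrix (Fin n) (Fin n) ℝ :=
      U * Matrix.diagonal (fun i => 1 / max (hSemp.1.eigenvalues i) (σmin ^ 2)) * star U
    Θhat.PosDef
      ∧ ((σmin ^ 2)⁻¹ • (1 : Matrix (Fin n) (Fin n) ℝ) - Θhat).PosSemidef
      ∧ ∀ Θ : Matrix (Fin n) (Fin n) ℝ, Θ.PosDef →
          ((σmin ^ 2)⁻¹ • (1 : Matrix (Fin n) (Fin n) ℝ) - Θ).PosSemidef →
          (Sempᵀ * Θhat).trace - Real.log Θhat.det
            ≤ (Sempᵀ * Θ).trace - Real.log Θ.det := by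
  intro U Θhat
  classical
  have hs : (0:ℝ) < σmin ^ 2 := pow_pos hσ 2
  set s : ℝ := σmin ^ 2 with hs_def
  set lam : Fin n → ℝ := hSemp.1.eigenvalues with hlam_def
  have hlam : ∀ i, 0 ≤ lam i := fun i => hSemp.eigenvalues_nonneg i
  set m : Fin n → ℝ := fun i => max (lam i) s with hm_def
  have hmpos : ∀ i, 0 < m i := fun i => lt_of_lt_of_le hs (le_max_right _ _)
  have hsm : ∀ i, s ≤ m i := fun i => le_max_right _ _
  have hdpos : ∀ i, 0 < 1 / m i := fun i => by positivity
  have hU1 : star U * U = 1 := mem_unitaryGroup_iff'.mp hSemp.1.eigenvectorUnitary.2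
  have hU2 : U * star U = 1 := mem_unitaryGroup_iff.mp hSemp.1.eigenvectorUnitary.2
  have hUdet : IsUnit U.det :=
    isUnit_iff_exists_inv.mpr ⟨(star U).det, by rw [← det_mul, hU2, det_one]⟩
  have hsUdet : IsUnit (star U).det :=
    isUnit_iff_exists_inv.mpr ⟨U.det, by rw [← det_mul, hU1, det_one]⟩
  have hsUH : (star U)ᴴ = U := by
    rw [star_eq_conjTranspose, conjTranspose_conjTranspose]
  have hThat : Θhat = U * diagonal (fun i => 1 / m i) * star U := rfl
  have hspec : Semp = U * diagonal lam * star U := by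
    have h := hSemp.1.spectral_theorem
    have h2 : (RCLike.ofReal ∘ lam : Fin n → ℝ) = lam := by
      funext i; simp [RCLike.ofReal_real_eq_id]
    rw [h2] at h
    exact h
  have hSymm : Sempᵀ = Semp := by
    ext i j
    rw [transpose_apply]
    conv_rhs => rw [← hSemp.1.eq]
    rw [conjTranspose_apply, star_trivial]
  -- Part 1
  have hPD : Θhat.PosDef := by
    rw [hThat, ← hsUH]
    exact my_posDef_conj (posDef_diagonal_iff.mpr hdpos) hUdet
  refine ⟨hPD, ?_, ?_⟩
  -- Part 2
  · have hkey : s⁻¹ • (1 : Matrix (Fin n) (Fin n) ℝ) - Θhat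
        = U * diagonal (fun i => s⁻¹ - 1 / m i) * star U := by
      have hconst : U * diagonal (fun _ : Fin n => s⁻¹) * star U
          = s⁻¹ • (1 : Matrix (Fin n) (Fin n) ℝ) := by
        have : diagonal (fun _ : Fin n => s⁻¹) = s⁻¹ • (1 : Matrix (Fin n) (Fin n) ℝ) := by
          ext i j
          by_cases h : i = j <;> simp [diagonal, Matrix.one_apply, h]
        rw [this, Matrix.mul_smul, Matrix.smul_mul, mul_one, hU2]
      have hdiag : diagonal (fun i => s⁻¹ - 1 / m i)
          = diagonal (fun _ : Fin n => s⁻¹) - diagonal (fun i => 1 / m i) := by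
        rw [diagonal_sub]
      rw [hdiag, Matrix.mul_sub, Matrix.sub_mul, hconst, hThat]
    rw [hkey, ← hsUH]
    refine PosSemidef.mul_mul_conjTranspose_same (PosSemidef.diagonal ?_) U
    intro i
    have h1 : (1:ℝ) / m i ≤ 1 / s := one_div_le_one_div_of_le hs (hsm i)
    rw [one_div] at h1
    simpa using sub_nonneg.mpr h1
  -- Part 3
  · intro Θ hΘ hFeas
    set B : Matrix (Fin n) (Fin n) ℝ := star U * Θ * U with hB_def
    have hBPD : B.PosDef := by
      have h := my_posDef_conj hΘ (N := star U) hsUdet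
      rwa [hsUH] at h
    have hBpos : ∀ i, 0 < B i i := my_posDef_diag_pos hBPD
    have hsB : ∀ i, s * B i i ≤ 1 := by
      intro i
      have hpsd : (s⁻¹ • (1 : Matrix (Fin n) (Fin n) ℝ) - B).PosSemidef := by
        have heq : s⁻¹ • (1 : Matrix (Fin n) (Fin n) ℝ) - B
            = star U * (s⁻¹ • (1 : Matrix (Fin n) (Fin n) ℝ) - Θ) * (star U)ᴴ := by
          rw [hsUH, Matrix.mul_sub, Matrix.sub_mul, hB_def]
          congr 1
          rw [Matrix.mul_smul, Matrix.smul_mul, mul_one, hU1]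
        rw [heq]
        exact hFeas.mul_mul_conjTranspose_same _
      have h0 := my_posSemidef_diag_nonneg hpsd i
      have h1 : (s⁻¹ • (1 : Matrix (Fin n) (Fin n) ℝ) - B) i i = s⁻¹ - B i i := by
        simp [Matrix.sub_apply, Matrix.smul_apply, Matrix.one_apply_eq]
      rw [h1, sub_nonneg] at h0
      calc s * B i i ≤ s * s⁻¹ := by nlinarith
        _ = 1 := mul_inv_cancel₀ hs.ne'
    -- traces and determinants
    have t1 : (Sempᵀ * Θ).trace = ∑ i, lam i * B i i := by
      rw [hSymm, hspec, my_conj_trace_mul]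
    have t2 : (Sempᵀ * Θhat).trace = ∑ i, lam i * (1 / m i) := by
      rw [hSymm, hspec, hThat, my_conj_mul hU1, my_conj_trace hU1]
    have logdhat : Real.log Θhat.det = - ∑ i, Real.log (m i) := by
      rw [hThat, my_conj_det hU2]
      rw [Real.log_prod (fun i _ => (hdpos i).ne')]
      rw [← Finset.sum_neg_distrib]
      congr 1; funext i
      rw [one_div, Real.log_inv]
    -- the matrix X = R * Θ * R
    set R : Matrix (Fin n) (Fin n) ℝ :=
      U * diagonal (fun i => Real.sqrt (m i)) * star U with hR_def
    have hRH : Rᴴ = R := by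
      rw [hR_def, conjTranspose_mul, conjTranspose_mul, hsUH,
        diagonal_conjTranspose, ← star_eq_conjTranspose U]
      simp [Matrix.mul_assoc, star_trivial]
    have hRdet : IsUnit R.det := by
      rw [hR_def, my_conj_det hU2]
      refine isUnit_iff_ne_zero.mpr (ne_of_gt ?_)
      exact Finset.prod_pos fun i _ => Real.sqrt_pos.mpr (hmpos i)
    have hXPD : (R * Θ * R).PosDef := by
      have h := my_posDef_conj hΘ (N := R) hRdet
      rwa [hRH] at h
    have hRR : R * R = U * diagonal m * star U := by
      rw [hR_def, my_conj_mul hU1,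
        show (fun i => Real.sqrt (m i) * Real.sqrt (m i)) = m from
          funext fun i => Real.mul_self_sqrt (hmpos i).le]
    have hXtr : (R * Θ * R).trace = ∑ i, m i * B i i := by
      rw [trace_mul_cycle, hRR, my_conj_trace_mul]
    have hXdet : (R * Θ * R).det = (∏ i, m i) * Θ.det := by
      rw [det_mul, det_mul, hR_def, my_conj_det hU2, mul_right_comm,
        ← Finset.prod_mul_distrib]
      rw [show (fun i => Real.sqrt (m i) * Real.sqrt (m i)) = m from
          funext fun i => Real.mul_self_sqrt (hmpos i).le]
    have hlogX := my_logdet_le hXPD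
    rw [hXdet, hXtr, Real.log_mul (by positivity) hΘ.det_pos.ne',
      Real.log_prod (fun i _ => (hmpos i).ne')] at hlogX
    -- per-coordinate inequality
    have per : ∀ i, lam i * (1 / m i) ≤ (lam i - m i) * B i i + 1 := by
      intro i
      rcases le_total s (lam i) with h | h
      · have hmi : m i = lam i := max_eq_left h
        rw [hmi, sub_self, zero_mul, zero_add, mul_one_div,
          div_self (lt_of_lt_of_le hs h).ne']
      · have hmi : m i = s := max_eq_right h
        rw [hmi, mul_one_div, div_le_iff₀ hs]
        nlinarith [mul_nonneg (sub_nonneg.2 h) (sub_nonneg.2 (hsB i)), hBpos i, hlam i]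
    have hsum : ∑ i, lam i * (1 / m i) ≤ ∑ i, ((lam i - m i) * B i i + 1) :=
      Finset.sum_le_sum fun i _ => per i
    rw [Finset.sum_add_distrib, Finset.sum_const, Finset.card_univ, Fintype.card_fin,
      nsmul_eq_mul] at hsum
    have hexp : ∑ i, (lam i - m i) * B i i = ∑ i, lam i * B i i - ∑ i, m i * B i i := by
      rw [← Finset.sum_sub_distrib]
      congr 1; funext i; ring
    rw [hexp] at hsum
    rw [t1, t2, logdhat]
    linarith
end

section
/- Let S be symmetric positive definite, X ∈ R^{n×p}, Ȳ ∈ R^{n×q}, λ > 0, j ∈ [p] with X_{:j} ≠ 0. Consider minimizing over the single row B_{j:} ∈ R^{1×q} the function b ↦ (1/(2nq))‖Ȳ − ∑_{k≠j} X_{:k}B_{k:} − X_{:j}b‖²_{S⁻¹} + λ‖b‖. The unique minimizer is b* = BST(B_{j:} + X_{:j}ᵀ S⁻¹ (Ȳ − XB)/‖X_{:j}‖²_{S⁻¹}, λnq/‖X_{:j}‖²_{S⁻¹}), where BST(x, τ) = (1 − τ/‖x‖)₊ x is block soft-thresholding and ‖X_{:j}‖²_{S⁻¹} = X_{:j}ᵀ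 S⁻¹ X_{:j}. -/
open Matrix

/-- Block soft-thresholding: `BST(x, τ) = (1 − τ/‖x‖)₊ x`. -/
noncomputable def bst {q : ℕ} (x : Fin q → ℝ) (τ : ℝ) : Fin q → ℝ :=
  max (1 - τ / Real.sqrt (∑ k, (x k) ^ 2)) 0 • x

lemma cauchy {q : ℕ} (v b : Fin q → ℝ) :
    ∑ k, v k * b k ≤ Real.sqrt (∑ k, (v k)^2) * Real.sqrt (∑ k, (b k)^2) := by
  calc ∑ k, v k * b k ≤ |∑ k, v k * b k| := le_abs_self _
    _ = Real.sqrt ((∑ k, v k * b k)^2) := (Real.sqrt_sq_eq_abs _).symm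
    _ ≤ Real.sqrt ((∑ k, (v k)^2) * (∑ k, (b k)^2)) :=
        Real.sqrt_le_sqrt (Finset.sum_mul_sq_le_sq_mul_sq _ _ _)
    _ = _ := Real.sqrt_mul (Finset.sum_nonneg fun k _ => sq_nonneg _) _

lemma sum_sub_sq {q : ℕ} (a c : Fin q → ℝ) :
    ∑ k, (a k - c k)^2 = ∑ k, (a k)^2 - 2*(∑ k, c k * a k) + ∑ k, (c k)^2 := by
  rw [Finset.sum_congr rfl (fun k _ => by ring :
    ∀ k ∈ Finset.univ, (a k - c k)^2 = ((a k)^2 + (c k)^2) - 2*(c k * a k)),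
    Finset.sum_sub_distrib, Finset.sum_add_distrib, ← Finset.mul_sum]
  ring

lemma prox_key {q : ℕ} (v : Fin q → ℝ) (τ : ℝ) (hτ : 0 < τ) (b : Fin q → ℝ) :
    (∑ k, (bst v τ k - v k)^2)/2 + τ * Real.sqrt (∑ k, (bst v τ k)^2)
      + (∑ k, (b k - bst v τ k)^2)/2
    ≤ (∑ k, (b k - v k)^2)/2 + τ * Real.sqrt (∑ k, (b k)^2) := by
  set P := ∑ k, (v k)^2 with hP
  set Q := ∑ k, (b k)^2 with hQ
  set D := ∑ k, v k * b k with hD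
  have hPnn : 0 ≤ P := Finset.sum_nonneg fun k _ => sq_nonneg _
  have hQnn : 0 ≤ Q := Finset.sum_nonneg fun k _ => sq_nonneg _
  set nv := Real.sqrt P with hnv
  set nb := Real.sqrt Q with hnb
  have hnv2 : nv^2 = P := Real.sq_sqrt hPnn
  have hnb2 : nb^2 = Q := Real.sq_sqrt hQnn
  have hnvnn : 0 ≤ nv := Real.sqrt_nonneg _
  have hnbnn : 0 ≤ nb := Real.sqrt_nonneg _
  have hcs : D ≤ nv * nb := cauchy v b
  rcases le_or_gt nv τ with hcase | hcase
  · -- bst v τ = 0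
    have hb0 : bst v τ = 0 := by
      rcases eq_or_lt_of_le hnvnn with h0 | h0
      · have hP0 : ∑ k, (v k)^2 = 0 := by rw [← hP, ← hnv2, ← h0]; ring
        have hv0 : ∀ k, v k = 0 := fun k => by
          have := (Finset.sum_eq_zero_iff_of_nonneg
            (fun k _ => sq_nonneg (v k))).mp hP0 k (Finset.mem_univ k)
          exact pow_eq_zero_iff (two_ne_zero) |>.mp this
        funext k; simp [bst, hv0 k]
      · have hle : 1 - τ / nv ≤ 0 := by
          rw [sub_nonpos, le_div_iff₀ h0]; linarith
        funext k
        simp [bst, ← hP, ← hnv, max_eq_right hle]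
    rw [hb0]
    simp only [Pi.zero_apply, sub_zero]
    rw [show (∑ k : Fin q, ((0:ℝ) - v k)^2) = P from by
      rw [hP]; exact Finset.sum_congr rfl fun k _ => by ring]
    rw [show (∑ _k : Fin q, ((0:ℝ))^2) = 0 from by simp, Real.sqrt_zero, mul_zero, add_zero]
    rw [sum_sub_sq b v, ← hP, ← hQ, ← hD]
    nlinarith [hcs, mul_le_mul_of_nonneg_right hcase hnbnn]
  · -- bst v τ = (1 - τ/nv) • v
    have hnvpos : 0 < nv := lt_trans hτ hcase
    have hs : 0 < 1 - τ / nv := by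
      rw [sub_pos, div_lt_one hnvpos]; exact hcase
    set s := 1 - τ / nv with hsdef
    have hbst : bst v τ = fun k => s * v k := by
      funext k; simp [bst, ← hP, ← hnv, max_eq_left hs.le, ← hsdef]
    simp only [hbst]
    have e1 : (∑ k, (s * v k - v k)^2) = (s-1)^2 * P := by
      rw [hP, Finset.mul_sum]
      exact Finset.sum_congr rfl fun k _ => by ring
    have e2 : (∑ k, (s * v k)^2) = s^2 * P := by
      rw [hP, Finset.mul_sum]
      exact Finset.sum_congr rfl fun k _ => by ring
    have e3 : (∑ k, (b k - s * v k)^2) = Q - 2*(s*D) + s^2*P := by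
      rw [sum_sub_sq]
      rw [show (∑ k, s * v k * b k) = s * D from by
        rw [hD, Finset.mul_sum]; exact Finset.sum_congr rfl fun k _ => by ring]
      rw [e2, ← hQ]
    have e4 : (∑ k, (b k - v k)^2) = Q - 2*D + P := by
      rw [sum_sub_sq, ← hP, ← hQ, ← hD]
    have e5 : Real.sqrt (s^2 * P) = nv - τ := by
      rw [Real.sqrt_mul (sq_nonneg s), Real.sqrt_sq hs.le, ← hnv, hsdef]
      field_simp
    rw [e1, e3, e4, e2, e5]
    have hP' : P = nv^2 := hnv2.symm
    have hA1 : (s-1)^2 * P = τ^2 := by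
      rw [hP', hsdef]; field_simp; ring
    have hA2 : s^2 * P = (nv - τ)^2 := by
      rw [hP', hsdef]; field_simp
    have h1s : (1 - s) * nv = τ := by rw [hsdef]; field_simp; ring
    have key : D - s * D ≤ τ * nb := by
      have h1snn : 0 ≤ 1 - s := by
        rw [hsdef]; simp [div_nonneg hτ.le hnvnn]
      have := mul_le_mul_of_nonneg_left hcs h1snn
      calc D - s * D = (1 - s) * D := by ring
        _ ≤ (1 - s) * (nv * nb) := this
        _ = ((1 - s) * nv) * nb := by ring
        _ = τ * nb := by rw [h1s]
    clear_value P Q D nv nb s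
    linarith [key, hA1, hA2, hP']

lemma quad_expand {n : ℕ} (A : Matrix (Fin n) (Fin n) ℝ) (hA : ∀ i l, A i l = A l i)
    (r x : Fin n → ℝ) (t : ℝ) :
    ∑ i, ∑ l, (r i - x i * t) * A i l * (r l - x l * t)
    = ∑ i, ∑ l, r i * A i l * r l - 2 * (∑ i, ∑ l, x i * A i l * r l) * t
      + (∑ i, ∑ l, x i * A i l * x l) * t^2 := by
  have swap : ∑ i, ∑ l, r i * A i l * x l = ∑ i, ∑ l, x i * A i l * r l := by
    rw [Finset.sum_comm]
    exact Finset.sum_congr rfl fun i _ => Finset.sum_congr rfl fun l _ => by rw [hA l i]; ring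
  have expand : ∀ i l : Fin n, (r i - x i * t) * A i l * (r l - x l * t)
      = r i * A i l * r l - ((r i * A i l * x l) * t + (x i * A i l * r l) * t)
        + (x i * A i l * x l) * t^2 := fun i l => by ring
  simp only [expand, Finset.sum_add_distrib, Finset.sum_sub_distrib, ← Finset.sum_mul]
  rw [swap]; ring

/-- Single-row minimization for the concomitant objective with `S` fixed: the unique
minimizer over the `j`-th row is given by block soft-thresholding. -/
theorem stmt16 {n p q : ℕ} (hn : 0 < n) (hq : 0 < q)
    (S : Matrix (Fin n) (Fin n) ℝ) (hS : S.PosDef)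
    (X : Matrix (Fin n) (Fin p) ℝ) (Ybar : Matrix (Fin n) (Fin q) ℝ)
    (lam : ℝ) (hlam : 0 < lam) (j : Fin p)
    (hXj : (fun i => X i j) ≠ 0)
    (B : Matrix (Fin p) (Fin q) ℝ) :
    let L : ℝ := (Xᵀ * S⁻¹ * X) j j
    let g : (Fin q → ℝ) → ℝ := fun b =>
      (1 / (2 * n * q)) * ((Ybar - X * B.updateRow j b)ᵀ * S⁻¹
          * (Ybar - X * B.updateRow j b)).trace
        + lam * Real.sqrt (∑ k, (b k) ^ 2)
    let bstar : Fin q → ℝ :=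
      bst (fun k => B j k + (Xᵀ * S⁻¹ * (Ybar - X * B)) j k / L) (lam * n * q / L)
    (∀ b, g bstar ≤ g b) ∧ ∀ b, g b ≤ g bstar → b = bstar := by
  intro L g bstar
  have hnq : (0:ℝ) < (n:ℝ) * q := mul_pos (Nat.cast_pos.mpr hn) (Nat.cast_pos.mpr hq)
  have hSym : Sᵀ = S := hS.isHermitian
  have hSt : S⁻¹ᵀ = S⁻¹ := by rw [Matrix.transpose_nonsing_inv, hSym]
  have hA : ∀ i l, S⁻¹ i l = S⁻¹ l i := fun i l => by
    simpa using (congrFun (congrFun hSt i) l).symm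
  set x : Fin n → ℝ := fun i => X i j with hx
  have hLval : L = ∑ i, ∑ l, x i * S⁻¹ i l * x l := by
    simp only [L, Matrix.mul_apply, Matrix.transpose_apply, Finset.sum_mul]
    rw [Finset.sum_comm]
  have hL : 0 < L := by
    have hd : x ⬝ᵥ S⁻¹ *ᵥ x = ∑ i, ∑ l, x i * S⁻¹ i l * x l := by
      simp only [dotProduct, Matrix.mulVec, Finset.mul_sum]
      exact Finset.sum_congr rfl fun i _ => Finset.sum_congr rfl fun l _ => by ring
    have hpos := (hS.inv).dotProduct_mulVec_pos hXj
    rw [hLval, ← hd]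
    simpa using hpos
  set R : Fin n → Fin q → ℝ := fun i k => Ybar i k - (X * B) i k + x i * B j k with hR
  set q0 : Fin q → ℝ := fun k => ∑ i, ∑ l, R i k * S⁻¹ i l * R l k with hq0
  set c : Fin q → ℝ := fun k => ∑ i, ∑ l, x i * S⁻¹ i l * R l k with hc
  set v : Fin q → ℝ := fun k => c k / L with hv
  have hLv : ∀ k, L * v k = c k := fun k => by
    simp only [hv]; field_simp
  -- pointwise entries of the residual matrix
  have hE : ∀ (b : Fin q → ℝ) i k, (Ybar - X * B.updateRow j b) i k = R i k - x i * b k := by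
    intro b i k
    simp only [Matrix.sub_apply, Matrix.mul_apply, Matrix.updateRow_apply, hR, hx]
    rw [show (∑ m, X i m * (if m = j then b k else B m k))
        = (∑ m, X i m * B m k) + X i j * (b k - B j k) by
      rw [Finset.sum_congr rfl (fun m _ => by
        split_ifs with h
        · subst h; ring
        · ring : ∀ m ∈ Finset.univ, X i m * (if m = j then b k else B m k)
            = X i m * B m k + (if m = j then X i m * (b k - B m k) else 0)),
        Finset.sum_add_distrib, Finset.sum_ite_eq' Finset.univ j
          (fun m => X i m * (b k - B m k))]
      simp]
    ring
  -- expansion of the trace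
  have hT : ∀ b : Fin q → ℝ,
      ((Ybar - X * B.updateRow j b)ᵀ * S⁻¹ * (Ybar - X * B.updateRow j b)).trace
      = ∑ k, (q0 k - 2 * c k * b k + L * b k^2) := by
    intro b
    rw [Matrix.trace]
    refine Finset.sum_congr rfl fun k _ => ?_
    have step : (((Ybar - X * B.updateRow j b)ᵀ * S⁻¹ * (Ybar - X * B.updateRow j b)).diag k)
        = ∑ i, ∑ l, ((Ybar - X * B.updateRow j b) i k * S⁻¹ i l
            * (Ybar - X * B.updateRow j b) l k) := by
      simp only [Matrix.diag_apply, Matrix.mul_apply, Matrix.transpose_apply, Finset.sum_mul]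
      rw [Finset.sum_comm]
    rw [step]
    rw [Finset.sum_congr rfl fun i _ => Finset.sum_congr rfl fun l _ => by
      rw [hE b i k, hE b l k]]
    rw [quad_expand S⁻¹ hA (fun i => R i k) x (b k)]
    simp only [hq0, hc, hLval]
  -- the argument of bst agrees with v
  have harg : (fun k => B j k + (Xᵀ * S⁻¹ * (Ybar - X * B)) j k / L) = v := by
    funext k
    have hM : (Xᵀ * S⁻¹ * (Ybar - X * B)) j k
        = ∑ i, ∑ l, x i * S⁻¹ i l * (Ybar l k - (X * B) l k) := by
      simp only [Matrix.mul_apply, Matrix.transpose_apply, Matrix.sub_apply, Finset.sum_mul, hx]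
      rw [Finset.sum_comm]
    have hsplit : c k = (Xᵀ * S⁻¹ * (Ybar - X * B)) j k + L * B j k := by
      simp only [hc, hR, hM, hLval, Finset.sum_mul]
      rw [← Finset.sum_add_distrib]
      refine Finset.sum_congr rfl fun i _ => ?_
      rw [← Finset.sum_add_distrib]
      exact Finset.sum_congr rfl fun l _ => by ring
    simp only [hv, hsplit]
    field_simp
    ring
  -- master formula for g
  have hg : ∀ b : Fin q → ℝ, g b
      = (L/((n:ℝ)*q)) * ((∑ k, (b k - v k)^2)/2
          + (lam*n*q/L) * Real.sqrt (∑ k, (b k)^2))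
        + (1/(2*(n:ℝ)*q)) * (∑ k, (q0 k - L * (v k)^2)) := by
    intro b
    have hsq : ∀ k ∈ Finset.univ, q0 k - 2 * c k * (b k) + L * (b k)^2
        = L * (b k - v k)^2 + (q0 k - L * (v k)^2) := by
      intro k _
      have hvk : v k = c k / L := by simp only [hv]
      rw [hvk]
      field_simp
      ring
    simp only [g]
    rw [hT b]
    rw [Finset.sum_congr rfl hsq]
    rw [Finset.sum_add_distrib, ← Finset.mul_sum]
    field_simp
    ring
  have hτ : 0 < lam * n * q / L := by
    apply div_pos _ hL
    have h1 : (0:ℝ) < (n:ℝ) := Nat.cast_pos.mpr hn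
    have h2 : (0:ℝ) < (q:ℝ) := Nat.cast_pos.mpr hq
    positivity
  have hK : 0 < L / ((n:ℝ)*q) := div_pos hL hnq
  have hbstar : bstar = bst v (lam * n * q / L) := by
    simp only [bstar, harg]
  constructor
  · intro b
    rw [hg b, hg bstar, hbstar]
    have hpk := prox_key v (lam*n*q/L) hτ b
    have hnn : 0 ≤ (∑ k, (b k - bst v (lam*n*q/L) k)^2)/2 := by positivity
    have hF : (∑ k, (bst v (lam*n*q/L) k - v k)^2)/2
        + (lam*n*q/L) * Real.sqrt (∑ k, (bst v (lam*n*q/L) k)^2)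
        ≤ (∑ k, (b k - v k)^2)/2 + (lam*n*q/L) * Real.sqrt (∑ k, (b k)^2) := by
      linarith
    have := mul_le_mul_of_nonneg_left hF hK.le
    linarith
  · intro b hble
    rw [hg b, hg bstar, hbstar] at hble
    have hpk := prox_key v (lam*n*q/L) hτ b
    have hFle : (∑ k, (b k - v k)^2)/2 + (lam*n*q/L) * Real.sqrt (∑ k, (b k)^2)
        ≤ (∑ k, (bst v (lam*n*q/L) k - v k)^2)/2
          + (lam*n*q/L) * Real.sqrt (∑ k, (bst v (lam*n*q/L) k)^2) := by
      have := le_of_mul_le_mul_left (by linarith : L/((n:ℝ)*q)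
          * ((∑ k, (b k - v k)^2)/2 + (lam*n*q/L) * Real.sqrt (∑ k, (b k)^2))
        ≤ L/((n:ℝ)*q) * ((∑ k, (bst v (lam*n*q/L) k - v k)^2)/2
          + (lam*n*q/L) * Real.sqrt (∑ k, (bst v (lam*n*q/L) k)^2))) hK
      exact this
    have hsum0 : (∑ k, (b k - bst v (lam*n*q/L) k)^2) = 0 := by
      have hnn : 0 ≤ ∑ k, (b k - bst v (lam*n*q/L) k)^2 :=
        Finset.sum_nonneg fun k _ => sq_nonneg _
      linarith
    have hz := (Finset.sum_eq_zero_iff_of_nonneg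
      (fun k _ => sq_nonneg (b k - bst v (lam*n*q/L) k))).mp hsum0
    rw [hbstar]
    funext k
    have := hz k (Finset.mem_univ k)
    have := pow_eq_zero_iff (two_ne_zero) |>.mp this
    linarith [this]
end
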